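/- arXiv:2203.09852 — 7 statements merged into one kernel-verified Lean document; each statement's English description precedes it below -/
import Mathlib

section
/- Using the therapeutic threshold under α-miscalibration can incur regret of order α·m: for every integer m ≥ 2 and every α ∈ (0,1], with j* = m−1, there exists a configuration (μ, ỹ) with ECE at most α such that regret(μ,ỹ, m−1) ≥ α·m − 1. (Concretely, μ_m = 1 and μ_i = 0 for i < m, with ỹ_m = 1−α, is such a configuration.) -/
/-- **Regret of order `α·m` when using the therapeutic threshold under `α`-miscalibration.**
For every `m ≥ 2` and `α ∈ (0,1]`, with therapeutic threshold `j* = m−1`, there is a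
discretized configuration `(μ, ỹ)` (masses `μ_1,…,μ_m ≥ 0` summing to 1, conditional
means `ỹ_i ∈ [0,1]`) with ECE at most `α` whose regret at threshold `m−1` is at least
`α·m − 1`, where `Λ(μ,ỹ,j) = ∑_{i=j+1}^m μ_i·(m·ỹ_i − j*)/min(m−j*, j*)` and
`regret(μ,ỹ,j) = max_{j'∈{0,…,m}} Λ(μ,ỹ,j') − Λ(μ,ỹ,j)`. -/
theorem regret_lower_bound_at_therapeutic_threshold
    (m : ℕ) (hm : 2 ≤ m)
    (α : ℝ) (hα : α ∈ Set.Ioc (0 : ℝ) 1) :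
    ∃ μ ytil : ℕ → ℝ,
      (∀ i ∈ Finset.Icc 1 m, 0 ≤ μ i) ∧
      (∑ i ∈ Finset.Icc 1 m, μ i = 1) ∧
      (∀ i ∈ Finset.Icc 1 m, ytil i ∈ Set.Icc (0 : ℝ) 1) ∧
      (∑ i ∈ Finset.Icc 1 m, μ i * |ytil i - (i : ℝ) / m| ≤ α) ∧
      ((Finset.Icc 0 m).sup' ⟨0, Finset.mem_Icc.mpr ⟨le_rfl, Nat.zero_le m⟩⟩
          (fun j' => ∑ i ∈ Finset.Icc (j' + 1) m,
            μ i * ((m : ℝ) * ytil i - ((m : ℝ) - 1)) / min ((m : ℝ) - ((m : ℝ) - 1)) ((m : ℝ) - 1))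
        - ∑ i ∈ Finset.Icc ((m - 1) + 1) m,
            μ i * ((m : ℝ) * ytil i - ((m : ℝ) - 1)) / min ((m : ℝ) - ((m : ℝ) - 1)) ((m : ℝ) - 1))
        ≥ α * m - 1 := by
  obtain ⟨hα0, hα1⟩ := hα
  refine ⟨fun i => if i = m then 1 else 0, fun i => if i = m then 1 - α else 0,
    ?_, ?_, ?_, ?_, ?_⟩
  · intro i _; dsimp only; split <;> norm_num
  · rw [Finset.sum_eq_single_of_mem m (Finset.mem_Icc.mpr ⟨by omega, le_rfl⟩)]
    · simp
    · intro i _ hi; simp [hi]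
  · intro i _
    dsimp only; split <;> constructor <;> nlinarith
  · rw [Finset.sum_eq_single_of_mem m (Finset.mem_Icc.mpr ⟨by omega, le_rfl⟩)]
    · have hm0 : (m : ℝ) ≠ 0 := by positivity
      dsimp only
      rw [if_pos rfl, if_pos rfl, div_self hm0, one_mul, abs_of_nonpos (by linarith)]
      linarith
    · intro i _ hi; simp [hi]
  · have hmin : min ((m : ℝ) - ((m : ℝ) - 1)) ((m : ℝ) - 1) = 1 := by
      have : (2 : ℝ) ≤ m := by exact_mod_cast hm
      rw [min_eq_left (by linarith)]; ring
    have hm1 : (m - 1) + 1 = m := by omega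
    -- value of Λ at threshold m-1
    have hΛ : ∑ i ∈ Finset.Icc ((m - 1) + 1) m,
        (if i = m then (1:ℝ) else 0) * ((m : ℝ) * (if i = m then 1 - α else 0) - ((m : ℝ) - 1))
          / min ((m : ℝ) - ((m : ℝ) - 1)) ((m : ℝ) - 1) = 1 - α * m := by
      rw [hm1, Finset.Icc_self, Finset.sum_singleton, hmin]
      simp; ring
    rw [hΛ]
    -- sup' ≥ value at j' = m, which is 0 (empty sum)
    have hsup : (0:ℝ) ≤ (Finset.Icc 0 m).sup' ⟨0, Finset.mem_Icc.mpr ⟨le_rfl, Nat.zero_le m⟩⟩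
        (fun j' => ∑ i ∈ Finset.Icc (j' + 1) m,
          (if i = m then (1:ℝ) else 0) * ((m : ℝ) * (if i = m then 1 - α else 0) - ((m : ℝ) - 1))
            / min ((m : ℝ) - ((m : ℝ) - 1)) ((m : ℝ) - 1)) := by
      have hmem : m ∈ Finset.Icc 0 m := Finset.mem_Icc.mpr ⟨Nat.zero_le m, le_rfl⟩
      have := Finset.le_sup' (f := fun j' => ∑ i ∈ Finset.Icc (j' + 1) m,
          (if i = m then (1:ℝ) else 0) * ((m : ℝ) * (if i = m then 1 - α else 0) - ((m : ℝ) - 1))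
            / min ((m : ℝ) - ((m : ℝ) - 1)) ((m : ℝ) - 1)) hmem
      simpa [Finset.Icc_eq_empty_of_lt (Nat.lt_succ_self m)] using this
    linarith
end

section
/- (Reduction to constant predictors under MCE.) For every threshold j ∈ [0,m], the worst-case MCE cost is attained over constant predictors: c_MCE(j) equals the supremum of regret(j) taken only over configurations supported on a single value (n = 1, i.e., a single mass point μ_1 = 1 with one predicted value v_1 ∈ [0,1] and one conditional mean y_1 ∈ [0,1] satisfying |y_1 − v_1| ≤ α). -/
/-- A configuration: a finite family of mass points `k ∈ {1,…,n}` with masses `μ_k ≥ 0`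
summing to `1`, predicted values `v_k ∈ [0,1]` and conditional outcome means `y_k ∈ [0,1]`. -/
structure Config where
  n : ℕ
  μ : Fin n → ℝ
  v : Fin n → ℝ
  y : Fin n → ℝ
  μ_nonneg : ∀ k, 0 ≤ μ k
  μ_sum : ∑ k, μ k = 1
  v_mem : ∀ k, v k ∈ Set.Icc (0 : ℝ) 1
  y_mem : ∀ k, y k ∈ Set.Icc (0 : ℝ) 1

/-- The Net Benefit `Λ(j) = ∑_{k : m·v_k > j} μ_k·(m·y_k − j*)/min(m−j*, j*)`. -/
noncomputable def netBenefit (m : ℕ) (jstar : ℝ) (C : Config) (j : ℝ) : ℝ :=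
  ∑ k, if j < (m : ℝ) * C.v k then
    C.μ k * ((m : ℝ) * C.y k - jstar) / min ((m : ℝ) - jstar) jstar else 0

/-- The regret `regret(j) = sup_{j' ∈ [0,m]} Λ(j') − Λ(j)`. -/
noncomputable def configRegret (m : ℕ) (jstar : ℝ) (C : Config) (j : ℝ) : ℝ :=
  sSup (netBenefit m jstar C '' Set.Icc (0 : ℝ) (m : ℝ)) - netBenefit m jstar C j

/-- Maximum calibration error at most `α`: `|y_k − v_k| ≤ α` whenever `μ_k > 0`. -/
def MCEle (α : ℝ) (C : Config) : Prop := ∀ k, 0 < C.μ k → |C.y k - C.v k| ≤ α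

/-- Expected calibration error at most `α`: `∑_k μ_k·|y_k − v_k| ≤ α`. -/
def ECEle (α : ℝ) (C : Config) : Prop := (∑ k, C.μ k * |C.y k - C.v k|) ≤ α

/-- The worst-case MCE cost `c_MCE(j)`: the supremum of `regret(j)` over all
configurations with MCE at most `α`. -/
noncomputable def cMCE (m : ℕ) (jstar α j : ℝ) : ℝ :=
  sSup {r | ∃ C : Config, MCEle α C ∧ r = configRegret m jstar C j}

/-- The worst-case ECE cost `c_ECE(j)`: the supremum of `regret(j)` over all
configurations with ECE at most `α`. -/
noncomputable def cECE (m : ℕ) (jstar α j : ℝ) : ℝ :=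
  sSup {r | ∃ C : Config, ECEle α C ∧ r = configRegret m jstar C j}

private def constCfg (v y : ℝ) (hv : v ∈ Set.Icc (0:ℝ) 1) (hy : y ∈ Set.Icc (0:ℝ) 1) : Config where
  n := 1
  μ := fun _ => 1
  v := fun _ => v
  y := fun _ => y
  μ_nonneg := fun _ => zero_le_one
  μ_sum := by simp
  v_mem := fun _ => hv
  y_mem := fun _ => hy

private lemma nb_const (m : ℕ) (jstar v y : ℝ) (hv : v ∈ Set.Icc (0:ℝ) 1)
    (hy : y ∈ Set.Icc (0:ℝ) 1) (x : ℝ) :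
    netBenefit m jstar (constCfg v y hv hy) x
      = if x < (m:ℝ) * v then ((m:ℝ) * y - jstar) / min ((m:ℝ) - jstar) jstar else 0 := by
  simp [netBenefit, constCfg]
  have h1 : (@Finset.univ (Fin 1) (Fin.fintype (constCfg v y hv hy).n)).card = 1 := rfl
  rw [h1]
  simp

private lemma exists_ge_wavg {n : ℕ} (μ g : Fin n → ℝ) (hμ : ∀ k, 0 ≤ μ k)
    (hs : ∑ k, μ k = 1) : ∃ k, 0 < μ k ∧ (∑ l, μ l * g l) ≤ g k := by
  by_contra h
  push_neg at h
  have h1 : ∀ k ∈ Finset.univ, μ k * g k ≤ μ k * (∑ l, μ l * g l) := by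
    intro k _
    rcases (hμ k).lt_or_eq with hk | hk
    · exact mul_le_mul_of_nonneg_left (h k hk).le hk.le
    · simp [← hk]
  have hk0 : ∃ k, 0 < μ k := by
    by_contra hc
    push_neg at hc
    have : ∑ k, μ k = 0 := Finset.sum_eq_zero fun k _ => le_antisymm (hc k) (hμ k)
    rw [this] at hs; norm_num at hs
  obtain ⟨k0, hk0⟩ := hk0
  have h2 := Finset.sum_lt_sum h1 ⟨k0, Finset.mem_univ k0,
    mul_lt_mul_of_pos_left (h k0 hk0) hk0⟩
  rw [← Finset.sum_mul, hs, one_mul] at h2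
  exact lt_irrefl _ h2

/-- **Reduction to constant predictors under MCE.** For every threshold `j ∈ [0,m]`,
the worst-case MCE cost is attained over constant predictors: `c_MCE(j)` equals the
supremum of `regret(j)` taken only over configurations supported on a single value
(`n = 1`) with MCE at most `α`. -/
theorem cMCE_eq_sup_over_constant_configs
    (m : ℕ) (hm : 2 ≤ m)
    (jstar : ℝ) (hjstar1 : 0 < jstar) (hjstar2 : jstar < m)
    (α : ℝ) (hα1 : 0 < α) (hα2 : α < 1)
    (j : ℝ) (hj : j ∈ Set.Icc (0 : ℝ) (m : ℝ)) :
    cMCE m jstar α j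
      = sSup {r | ∃ C : Config, C.n = 1 ∧ MCEle α C ∧ r = configRegret m jstar C j} := by
  have hm' : (2:ℝ) ≤ (m:ℝ) := by exact_mod_cast hm
  set D : ℝ := min ((m:ℝ) - jstar) jstar with hD
  have hD0 : 0 < D := lt_min (by linarith) hjstar1
  set M : ℝ := max ((m:ℝ) - jstar) jstar / D with hM
  have hM0 : 0 ≤ M := div_nonneg (le_trans hjstar1.le (le_max_right _ _)) hD0.le
  -- bound on netBenefit
  have hnb : ∀ (C : Config) (x : ℝ), |netBenefit m jstar C x| ≤ M := by
    intro C x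
    have hterm : ∀ k, |if x < (m:ℝ) * C.v k then
        C.μ k * ((m:ℝ) * C.y k - jstar) / D else 0| ≤ C.μ k * M := by
      intro k
      have hμk := C.μ_nonneg k
      split
      · have hy := C.y_mem k
        have habs : |(m:ℝ) * C.y k - jstar| ≤ max ((m:ℝ) - jstar) jstar := by
          rw [abs_le]
          constructor
          · have h1 : jstar ≤ max ((m:ℝ) - jstar) jstar := le_max_right _ _
            have : 0 ≤ (m:ℝ) * C.y k := mul_nonneg (by positivity) hy.1
            linarith
          · have h1 : (m:ℝ) - jstar ≤ max ((m:ℝ) - jstar) jstar := le_max_left _ _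
            have : (m:ℝ) * C.y k ≤ (m:ℝ) := by
              nlinarith [hy.2]
            linarith
        rw [abs_div, abs_mul, abs_of_nonneg hμk, abs_of_pos hD0, hM, mul_div_assoc]
        gcongr
      · simpa using mul_nonneg hμk hM0
    calc |netBenefit m jstar C x|
        ≤ ∑ k, |if x < (m:ℝ) * C.v k then
            C.μ k * ((m:ℝ) * C.y k - jstar) / D else 0| := by
          rw [netBenefit]; exact Finset.abs_sum_le_sum_abs _ _
      _ ≤ ∑ k, C.μ k * M := Finset.sum_le_sum fun k _ => hterm k
      _ = M := by rw [← Finset.sum_mul, C.μ_sum, one_mul]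
  have hIcc_ne : (Set.Icc (0:ℝ) (m:ℝ)).Nonempty := Set.nonempty_Icc.2 (by linarith)
  have himg_ne : ∀ C : Config, (netBenefit m jstar C '' Set.Icc (0:ℝ) (m:ℝ)).Nonempty :=
    fun C => hIcc_ne.image _
  have himg_bdd : ∀ C : Config, ∀ x ∈ netBenefit m jstar C '' Set.Icc (0:ℝ) (m:ℝ), x ≤ M := by
    rintro C x ⟨j', _, rfl⟩
    exact (abs_le.1 (hnb C j')).2
  have hreg_bdd : ∀ C : Config, configRegret m jstar C j ≤ M + M := by
    intro C
    have h1 : sSup (netBenefit m jstar C '' Set.Icc (0:ℝ) (m:ℝ)) ≤ M :=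
      csSup_le (himg_ne C) (himg_bdd C)
    have h2 : -M ≤ netBenefit m jstar C j := (abs_le.1 (hnb C j)).1
    rw [configRegret]; linarith
  set SL := {r | ∃ C : Config, MCEle α C ∧ r = configRegret m jstar C j} with hSL
  set SR := {r | ∃ C : Config, C.n = 1 ∧ MCEle α C ∧ r = configRegret m jstar C j} with hSR
  have hsub : SR ⊆ SL := by rintro r ⟨C, _, hC, hr⟩; exact ⟨C, hC, hr⟩
  have hSL_bdd : BddAbove SL := by
    refine ⟨M + M, ?_⟩
    rintro r ⟨C, _, rfl⟩
    exact hreg_bdd C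
  have hSR_bdd : BddAbove SR := hSL_bdd.mono hsub
  have h01 : (0:ℝ) ∈ Set.Icc (0:ℝ) 1 := by norm_num
  have hSR_ne : SR.Nonempty := by
    refine ⟨configRegret m jstar (constCfg 0 0 h01 h01) j, constCfg 0 0 h01 h01, rfl, ?_, rfl⟩
    intro k _
    simp [constCfg]
    exact hα1.le
  have hSL_ne : SL.Nonempty := ⟨_, hsub hSR_ne.choose_spec⟩
  rw [cMCE]
  apply le_antisymm
  · apply csSup_le hSL_ne
    rintro r ⟨C, hC, rfl⟩
    -- show configRegret ≤ sSup SR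
    have key : ∀ j' ∈ Set.Icc (0:ℝ) (m:ℝ),
        netBenefit m jstar C j' - netBenefit m jstar C j ≤ sSup SR := by
      intro j' hj'
      -- rewrite difference as weighted average
      set g : Fin C.n → ℝ := fun k =>
        (if j' < (m:ℝ) * C.v k then ((m:ℝ) * C.y k - jstar) / D else 0)
        - (if j < (m:ℝ) * C.v k then ((m:ℝ) * C.y k - jstar) / D else 0) with hg
      have hdiff : netBenefit m jstar C j' - netBenefit m jstar C j = ∑ k, C.μ k * g k := by
        rw [netBenefit, netBenefit, ← Finset.sum_sub_distrib]
        refine Finset.sum_congr rfl fun k _ => ?_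
        simp only [hg]
        split <;> split <;> ring
      obtain ⟨k, hμk, hk⟩ := exists_ge_wavg C.μ g C.μ_nonneg C.μ_sum
      rw [hdiff]
      refine le_trans hk ?_
      -- g k equals nb difference for the constant config
      set C' := constCfg (C.v k) (C.y k) (C.v_mem k) (C.y_mem k) with hC'
      have hgk : g k = netBenefit m jstar C' j' - netBenefit m jstar C' j := by
        rw [hC', nb_const, nb_const, hg, ← hD]
      have hreg : g k ≤ configRegret m jstar C' j := by
        rw [hgk, configRegret]
        have hmem : netBenefit m jstar C' j' ∈
            netBenefit m jstar C' '' Set.Icc (0:ℝ) (m:ℝ) := ⟨j', hj', rfl⟩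
        have := le_csSup ⟨M, himg_bdd C'⟩ hmem
        linarith
      refine le_trans hreg (le_csSup hSR_bdd ?_)
      refine ⟨C', rfl, ?_, rfl⟩
      intro i _
      exact hC k hμk
    rw [configRegret, sub_le_iff_le_add]
    apply csSup_le (himg_ne C)
    rintro x ⟨j', hj', rfl⟩
    have := key j' hj'
    linarith
  · exact csSup_le_csSup hSL_bdd hSR_ne hsub
end

section
/- (Reduction to two-value predictors under ECE.) For every threshold j ∈ [0,m], the worst-case ECE cost is attained over predictors supported on at most two values: c_ECE(j) equals the supremum of regret(j) taken only over configurations with n ≤ 2 (at most two mass points, with masses μ_1, μ_2 ≥ 0 summing to 1, predicted values v_1, v_2 ∈ [0,1], conditional means y_1, y_2 ∈ [0,1], satisfying the ECE constraint μ_1·|y_1−v_1| + μ_2·|y_2−v_2| ≤ α). -/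
-- two point config
noncomputable def twoCfg (μ1 v1 y1 : ℝ) (h1 : μ1 ∈ Set.Icc (0:ℝ) 1)
    (hv : v1 ∈ Set.Icc (0:ℝ) 1) (hy : y1 ∈ Set.Icc (0:ℝ) 1) : Config where
  n := 2
  μ := ![μ1, 1 - μ1]
  v := ![v1, 0]
  y := ![y1, 0]
  μ_nonneg := by
    intro k; fin_cases k <;> simp [h1.1]
    linarith [h1.2]
  μ_sum := by simp [Fin.sum_univ_two]
  v_mem := by intro k; fin_cases k <;> simp [Set.mem_Icc, hv.1, hv.2]
  y_mem := by intro k; fin_cases k <;> simp [Set.mem_Icc, hy.1, hy.2]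

lemma twoCfg_nb (m : ℕ) (jstar : ℝ) (μ1 v1 y1 : ℝ) (h1 : μ1 ∈ Set.Icc (0:ℝ) 1)
    (hv : v1 ∈ Set.Icc (0:ℝ) 1) (hy : y1 ∈ Set.Icc (0:ℝ) 1) (t : ℝ) (ht : 0 ≤ t) :
    netBenefit m jstar (twoCfg μ1 v1 y1 h1 hv hy) t
      = if t < (m : ℝ) * v1 then μ1 * ((m : ℝ) * y1 - jstar) / min ((m : ℝ) - jstar) jstar
        else 0 := by
  unfold netBenefit twoCfg
  rw [Fin.sum_univ_two]
  simp only [Matrix.cons_val_zero, Matrix.cons_val_one, Matrix.head_cons, mul_zero]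
  rw [if_neg (not_lt.2 ht), add_zero]
  rfl

lemma twoCfg_ECE (α μ1 v1 y1 : ℝ) (h1 : μ1 ∈ Set.Icc (0:ℝ) 1)
    (hv : v1 ∈ Set.Icc (0:ℝ) 1) (hy : y1 ∈ Set.Icc (0:ℝ) 1)
    (h : μ1 * |y1 - v1| ≤ α) : ECEle α (twoCfg μ1 v1 y1 h1 hv hy) := by
  unfold ECEle twoCfg
  rw [Fin.sum_univ_two]
  simp only [Matrix.cons_val_zero, Matrix.cons_val_one, Matrix.head_cons]
  simpa using h

lemma nb_eq_filter (m : ℕ) (jstar : ℝ) (C : Config) (t : ℝ) :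
    netBenefit m jstar C t
      = ∑ k ∈ Finset.univ.filter (fun k => t < (m : ℝ) * C.v k),
          C.μ k * ((m : ℝ) * C.y k - jstar) / min ((m : ℝ) - jstar) jstar := by
  unfold netBenefit
  exact (Finset.sum_filter _ _).symm

lemma nb_image_finite (m : ℕ) (jstar : ℝ) (C : Config) :
    (netBenefit m jstar C '' Set.Icc (0 : ℝ) (m : ℝ)).Finite := by
  apply Set.Finite.subset (Set.finite_range
    (fun S : Finset (Fin C.n) => ∑ k ∈ S,
      C.μ k * ((m : ℝ) * C.y k - jstar) / min ((m : ℝ) - jstar) jstar))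
  rintro _ ⟨t, -, rfl⟩
  exact ⟨Finset.univ.filter (fun k => t < (m : ℝ) * C.v k), (nb_eq_filter m jstar C t).symm⟩

lemma nb_abs_le (m : ℕ) (jstar : ℝ) (h1 : 0 < jstar) (h2 : jstar < m) (C : Config) (t : ℝ) :
    |netBenefit m jstar C t| ≤ (m : ℝ) / min ((m : ℝ) - jstar) jstar := by
  have hD : 0 < min ((m : ℝ) - jstar) jstar := lt_min (by linarith) h1
  calc |netBenefit m jstar C t| ≤ ∑ k, |if t < (m : ℝ) * C.v k then
        C.μ k * ((m : ℝ) * C.y k - jstar) / min ((m : ℝ) - jstar) jstar else 0| :=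
      Finset.abs_sum_le_sum_abs _ _
    _ ≤ ∑ k, C.μ k * (m : ℝ) / min ((m : ℝ) - jstar) jstar := by
      apply Finset.sum_le_sum
      intro k _
      have hμ := C.μ_nonneg k
      have hy := C.y_mem k
      have habs : |(m : ℝ) * C.y k - jstar| ≤ (m : ℝ) := by
        rw [abs_le]
        constructor
        · nlinarith [hy.1, hy.2]
        · nlinarith [hy.1, hy.2]
      split_ifs with h
      · rw [abs_div, abs_of_pos hD, abs_mul, abs_of_nonneg hμ, div_le_div_iff₀ hD hD]
        exact mul_le_mul_of_nonneg_right (mul_le_mul_of_nonneg_left habs hμ) hD.le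
      · simp
        positivity
    _ = (m : ℝ) / min ((m : ℝ) - jstar) jstar := by
      rw [← Finset.sum_div, ← Finset.sum_mul, C.μ_sum, one_mul]

lemma key (m : ℕ) (jstar : ℝ) (hj1 : 0 < jstar) (hj2 : jstar < m)
    (α : ℝ) (hα : 0 ≤ α) (C : Config) (hC : ECEle α C)
    (a b : ℝ) (ha : 0 ≤ a) (hab : a ≤ b) :
    ∃ C₂ : Config, C₂.n ≤ 2 ∧ ECEle α C₂ ∧
      netBenefit m jstar C₂ a - netBenefit m jstar C₂ b
        = netBenefit m jstar C a - netBenefit m jstar C b := by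
  have hD : 0 < min ((m : ℝ) - jstar) jstar := lt_min (by linarith) hj1
  set D := min ((m : ℝ) - jstar) jstar with hDdef
  have hb : (0:ℝ) ≤ b := le_trans ha hab
  set B := Finset.univ.filter (fun k => a < (m : ℝ) * C.v k ∧ (m : ℝ) * C.v k ≤ b) with hBdef
  have hdiff : netBenefit m jstar C a - netBenefit m jstar C b
      = ∑ k ∈ B, C.μ k * ((m : ℝ) * C.y k - jstar) / D := by
    rw [hBdef, Finset.sum_filter]
    unfold netBenefit
    rw [← Finset.sum_sub_distrib]
    apply Finset.sum_congr rfl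
    intro k _
    rcases lt_or_ge a ((m:ℝ) * C.v k) with h1' | h1'
    · rcases lt_or_ge b ((m:ℝ) * C.v k) with h2' | h2'
      · rw [if_pos h1', if_pos h2', if_neg (by push_neg; intro _; linarith), sub_self]
      · rw [if_pos h1', if_neg (not_lt.2 h2'), if_pos ⟨h1', h2'⟩, sub_zero]
    · rw [if_neg (not_lt.2 h1'), if_neg (not_lt.2 (le_trans h1' hab)),
        if_neg (fun h => absurd h.1 (not_lt.2 h1')), sub_self]
  set M := ∑ k ∈ B, C.μ k with hMdef
  have hM0 : 0 ≤ M := Finset.sum_nonneg (fun k _ => C.μ_nonneg k)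
  by_cases hM : M = 0
  · have hz : ∀ k ∈ B, C.μ k = 0 :=
      (Finset.sum_eq_zero_iff_of_nonneg (fun k _ => C.μ_nonneg k)).1 hM
    have hd0 : netBenefit m jstar C a - netBenefit m jstar C b = 0 := by
      rw [hdiff]
      apply Finset.sum_eq_zero
      intro k hk
      rw [hz k hk]
      ring
    have h01 : (0:ℝ) ∈ Set.Icc (0:ℝ) 1 := by norm_num
    refine ⟨twoCfg 0 0 0 h01 h01 h01, le_refl _, ?_, ?_⟩
    · exact twoCfg_ECE α 0 0 0 h01 h01 h01 (by simpa using hα)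
    · rw [twoCfg_nb m jstar 0 0 0 h01 h01 h01 a ha, twoCfg_nb m jstar 0 0 0 h01 h01 h01 b hb,
        hd0, mul_zero, if_neg (not_lt.2 ha), if_neg (not_lt.2 hb), sub_self]
  · have hMpos : 0 < M := lt_of_le_of_ne hM0 (Ne.symm hM)
    set V := ∑ k ∈ B, C.μ k * C.v k with hVdef
    set Y := ∑ k ∈ B, C.μ k * C.y k with hYdef
    have hM1 : M ≤ 1 := by
      rw [← C.μ_sum]
      exact Finset.sum_le_sum_of_subset_of_nonneg (Finset.subset_univ _)
        (fun k _ _ => C.μ_nonneg k)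
    have hV0 : 0 ≤ V := Finset.sum_nonneg
      (fun k _ => mul_nonneg (C.μ_nonneg k) (C.v_mem k).1)
    have hVM : V ≤ M := Finset.sum_le_sum
      (fun k _ => by nlinarith [(C.v_mem k).2, C.μ_nonneg k])
    have hY0 : 0 ≤ Y := Finset.sum_nonneg
      (fun k _ => mul_nonneg (C.μ_nonneg k) (C.y_mem k).1)
    have hYM : Y ≤ M := Finset.sum_le_sum
      (fun k _ => by nlinarith [(C.y_mem k).2, C.μ_nonneg k])
    have hvmem : V / M ∈ Set.Icc (0:ℝ) 1 := ⟨div_nonneg hV0 hM0, (div_le_one hMpos).2 hVM⟩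
    have hymem : Y / M ∈ Set.Icc (0:ℝ) 1 := ⟨div_nonneg hY0 hM0, (div_le_one hMpos).2 hYM⟩
    refine ⟨twoCfg M (V/M) (Y/M) ⟨hM0, hM1⟩ hvmem hymem, le_refl _, ?_, ?_⟩
    · apply twoCfg_ECE
      have heq : M * |Y/M - V/M| = |Y - V| := by
        rw [div_sub_div_same, abs_div, abs_of_pos hMpos]
        field_simp
      rw [heq]
      calc |Y - V| = |∑ k ∈ B, C.μ k * (C.y k - C.v k)| := by
            rw [hYdef, hVdef, ← Finset.sum_sub_distrib]
            congr 1
            apply Finset.sum_congr rfl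
            intro k _
            ring
        _ ≤ ∑ k ∈ B, |C.μ k * (C.y k - C.v k)| := Finset.abs_sum_le_sum_abs _ _
        _ = ∑ k ∈ B, C.μ k * |C.y k - C.v k| := by
            apply Finset.sum_congr rfl
            intro k _
            rw [abs_mul, abs_of_nonneg (C.μ_nonneg k)]
        _ ≤ ∑ k, C.μ k * |C.y k - C.v k| :=
            Finset.sum_le_sum_of_subset_of_nonneg (Finset.subset_univ _)
              (fun k _ _ => mul_nonneg (C.μ_nonneg k) (abs_nonneg _))
        _ ≤ α := hC
    · obtain ⟨k0, hk0B, hk0ne⟩ := Finset.exists_ne_zero_of_sum_ne_zero hM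
      have hk0pos : 0 < C.μ k0 := lt_of_le_of_ne (C.μ_nonneg k0) (Ne.symm hk0ne)
      have hk0' := (Finset.mem_filter.1 hk0B).2
      have hmV_gt : a * M < (m:ℝ) * V := by
        have e1 : a * M = ∑ k ∈ B, C.μ k * a := by
          rw [hMdef, Finset.mul_sum]
          apply Finset.sum_congr rfl
          intro k _; ring
        have e2 : (m:ℝ) * V = ∑ k ∈ B, C.μ k * ((m:ℝ) * C.v k) := by
          rw [hVdef, Finset.mul_sum]
          apply Finset.sum_congr rfl
          intro k _; ring
        rw [e1, e2]
        apply Finset.sum_lt_sum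
        · intro k hk
          exact mul_le_mul_of_nonneg_left ((Finset.mem_filter.1 hk).2.1.le) (C.μ_nonneg k)
        · exact ⟨k0, hk0B, mul_lt_mul_of_pos_left hk0'.1 hk0pos⟩
      have hmV_le : (m:ℝ) * V ≤ b * M := by
        have e1 : b * M = ∑ k ∈ B, C.μ k * b := by
          rw [hMdef, Finset.mul_sum]
          apply Finset.sum_congr rfl
          intro k _; ring
        have e2 : (m:ℝ) * V = ∑ k ∈ B, C.μ k * ((m:ℝ) * C.v k) := by
          rw [hVdef, Finset.mul_sum]
          apply Finset.sum_congr rfl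
          intro k _; ring
        rw [e1, e2]
        exact Finset.sum_le_sum
          (fun k hk => mul_le_mul_of_nonneg_left (Finset.mem_filter.1 hk).2.2 (C.μ_nonneg k))
      have hva : a < (m:ℝ) * (V/M) := by
        rw [mul_div_assoc']
        exact (lt_div_iff₀ hMpos).2 hmV_gt
      have hvb : ¬ b < (m:ℝ) * (V/M) := by
        push_neg
        rw [mul_div_assoc']
        exact (div_le_iff₀ hMpos).2 hmV_le
      rw [twoCfg_nb m jstar M (V/M) (Y/M) ⟨hM0, hM1⟩ hvmem hymem a ha,
        twoCfg_nb m jstar M (V/M) (Y/M) ⟨hM0, hM1⟩ hvmem hymem b hb,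
        if_pos hva, if_neg hvb, sub_zero, hdiff]
      have hsum : ∑ k ∈ B, C.μ k * ((m:ℝ) * C.y k - jstar) / D
          = ((m:ℝ) * Y - jstar * M) / D := by
        rw [← Finset.sum_div]
        congr 1
        rw [hYdef, hMdef, Finset.mul_sum, Finset.mul_sum, ← Finset.sum_sub_distrib]
        apply Finset.sum_congr rfl
        intro k _; ring
      rw [hsum]
      congr 1
      field_simp


/-- **Reduction to two-value predictors under ECE.** For every threshold `j ∈ [0,m]`,
the worst-case ECE cost is attained over predictors supported on at most two values:
`c_ECE(j)` equals the supremum of `regret(j)` taken only over configurations with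
`n ≤ 2` and ECE at most `α`. -/
theorem cECE_eq_sup_over_two_value_configs
    (m : ℕ) (hm : 2 ≤ m)
    (jstar : ℝ) (hjstar1 : 0 < jstar) (hjstar2 : jstar < m)
    (α : ℝ) (hα1 : 0 < α) (hα2 : α < 1)
    (j : ℝ) (hj : j ∈ Set.Icc (0 : ℝ) (m : ℝ)) :
    cECE m jstar α j
      = sSup {r | ∃ C : Config, C.n ≤ 2 ∧ ECEle α C ∧ r = configRegret m jstar C j} := by
  have hD : 0 < min ((m : ℝ) - jstar) jstar := lt_min (by linarith) hjstar1
  set D := min ((m : ℝ) - jstar) jstar with hDdef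
  have hm0 : (0:ℝ) ≤ (m:ℝ) := by positivity
  have h0Icc : (0:ℝ) ∈ Set.Icc (0:ℝ) (m:ℝ) := ⟨le_refl 0, hm0⟩
  set S := {r | ∃ C : Config, ECEle α C ∧ r = configRegret m jstar C j} with hSdef
  set S₂ := {r | ∃ C : Config, C.n ≤ 2 ∧ ECEle α C ∧ r = configRegret m jstar C j} with hS2def
  have hsub : S₂ ⊆ S := by
    rintro r ⟨C, -, hE, hr⟩
    exact ⟨C, hE, hr⟩
  have hbdd : BddAbove S := by
    refine ⟨2 * (m:ℝ) / D, ?_⟩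
    rintro r ⟨C, -, rfl⟩
    unfold configRegret
    have him_ne : (netBenefit m jstar C '' Set.Icc (0:ℝ) (m:ℝ)).Nonempty :=
      ⟨_, Set.mem_image_of_mem _ h0Icc⟩
    have h1' : sSup (netBenefit m jstar C '' Set.Icc (0:ℝ) (m:ℝ)) ≤ (m:ℝ)/D := by
      apply csSup_le him_ne
      rintro _ ⟨t, -, rfl⟩
      exact le_trans (le_abs_self _) (nb_abs_le m jstar hjstar1 hjstar2 C t)
    have h2' : -((m:ℝ)/D) ≤ netBenefit m jstar C j :=
      neg_le_of_abs_le (nb_abs_le m jstar hjstar1 hjstar2 C j)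
    have : 2 * (m:ℝ) / D = (m:ℝ)/D + (m:ℝ)/D := by ring
    linarith
  have h01 : (0:ℝ) ∈ Set.Icc (0:ℝ) 1 := by norm_num
  have hS2ne : S₂.Nonempty :=
    ⟨_, twoCfg 0 0 0 h01 h01 h01, le_refl _,
      twoCfg_ECE α 0 0 0 h01 h01 h01 (by simpa using hα1.le), rfl⟩
  apply le_antisymm
  · apply csSup_le (hS2ne.mono hsub)
    rintro r ⟨C, hE, rfl⟩
    have hfin := nb_image_finite m jstar C
    have him_ne : (netBenefit m jstar C '' Set.Icc (0:ℝ) (m:ℝ)).Nonempty :=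
      ⟨_, Set.mem_image_of_mem _ h0Icc⟩
    obtain ⟨j', hj'Icc, hj'eq⟩ := him_ne.csSup_mem hfin
    have step : ∀ C₂ : Config, C₂.n ≤ 2 → ECEle α C₂ →
        netBenefit m jstar C₂ j' - netBenefit m jstar C₂ j
          = netBenefit m jstar C j' - netBenefit m jstar C j →
        configRegret m jstar C j ≤ sSup S₂ := by
      intro C₂ hn hE₂ hdq
      have hle : netBenefit m jstar C₂ j' ≤
          sSup (netBenefit m jstar C₂ '' Set.Icc (0:ℝ) (m:ℝ)) :=
        le_csSup (nb_image_finite m jstar C₂).bddAbove (Set.mem_image_of_mem _ hj'Icc)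
      have h3 : configRegret m jstar C j ≤ configRegret m jstar C₂ j := by
        unfold configRegret
        rw [← hj'eq]
        linarith
      exact le_trans h3 (le_csSup (hbdd.mono hsub) ⟨C₂, hn, hE₂, rfl⟩)
    rcases le_total j' j with hc | hc
    · obtain ⟨C₂, hn, hE₂, hdq⟩ :=
        key m jstar hjstar1 hjstar2 α hα1.le C hE j' j hj'Icc.1 hc
      exact step C₂ hn hE₂ hdq
    · obtain ⟨C₂, hn, hE₂, hdq⟩ :=
        key m jstar hjstar1 hjstar2 α hα1.le C hE j j' hj.1 hc
      exact step C₂ hn hE₂ (by linarith)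
  · exact csSup_le_csSup hbdd hS2ne hsub
end

section
/- (Closed form for the under-treatment optimization problem under ECE.) Let m ≥ 2 be an integer, j* real with 0 < j* < m, α ∈ [0,1], and j ∈ [0,m]. Define S(j) as the supremum of μ·(m·(v+δ) − j*) over all μ ∈ [0,1], v ∈ [0, j/m], δ ∈ [0, 1−v] satisfying μ·δ ≤ α. Then: S(j) = j − j* + αm whenever j* ≤ j ≤ (1−α)m; S(j) = m − j* whenever j ≥ j* and j ≥ (1−α)m; and S(j) = αm·(m−j*)/(m−j) whenever j ≤ j*, j ≤ (1−α)m and j < m. -/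
/-- **Closed form for the under-treatment optimization problem under ECE.**
Let `m ≥ 2`, `0 < j* < m`, `α ∈ [0,1]`, `j ∈ [0,m]`, and let `S(j)` be the supremum of
`μ·(m·(v+δ) − j*)` over `μ ∈ [0,1]`, `v ∈ [0, j/m]`, `δ ∈ [0, 1−v]` with `μ·δ ≤ α`.
Then `S(j) = j − j* + αm` for `j* ≤ j ≤ (1−α)m`; `S(j) = m − j*` for `j ≥ j*` and
`j ≥ (1−α)m`; and `S(j) = αm·(m−j*)/(m−j)` for `j ≤ j*`, `j ≤ (1−α)m`, `j < m`. -/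
theorem under_treatment_opt_closed_form
    (m : ℕ) (hm : 2 ≤ m)
    (jstar : ℝ) (hjstar1 : 0 < jstar) (hjstar2 : jstar < m)
    (α : ℝ) (hα : α ∈ Set.Icc (0 : ℝ) 1)
    (j : ℝ) (hj : j ∈ Set.Icc (0 : ℝ) (m : ℝ)) :
    let S : ℝ := sSup {r | ∃ μ v δ : ℝ,
      μ ∈ Set.Icc (0 : ℝ) 1 ∧ v ∈ Set.Icc (0 : ℝ) (j / m) ∧ δ ∈ Set.Icc (0 : ℝ) (1 - v) ∧
      μ * δ ≤ α ∧ r = μ * ((m : ℝ) * (v + δ) - jstar)}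
    (jstar ≤ j → j ≤ (1 - α) * m → S = j - jstar + α * m) ∧
    (jstar ≤ j → (1 - α) * m ≤ j → S = (m : ℝ) - jstar) ∧
    (j ≤ jstar → j ≤ (1 - α) * m → j < m → S = α * m * ((m : ℝ) - jstar) / ((m : ℝ) - j)) := by
  obtain ⟨hα0, hα1⟩ := hα
  obtain ⟨hj0, hjm⟩ := hj
  have hm2 : (2:ℝ) ≤ (m:ℝ) := by exact_mod_cast hm
  have hm0 : (0:ℝ) < (m:ℝ) := by linarith
  intro S
  set T : Set ℝ := {r | ∃ μ v δ : ℝ,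
      μ ∈ Set.Icc (0 : ℝ) 1 ∧ v ∈ Set.Icc (0 : ℝ) (j / m) ∧ δ ∈ Set.Icc (0 : ℝ) (1 - v) ∧
      μ * δ ≤ α ∧ r = μ * ((m : ℝ) * (v + δ) - jstar)} with hTdef
  have hjm_div : 0 ≤ j / m := div_nonneg hj0 hm0.le
  have hne : T.Nonempty := by
    refine ⟨0, 0, 0, 0, ⟨le_refl 0, by norm_num⟩, ⟨le_refl 0, hjm_div⟩,
      ⟨le_refl 0, by norm_num⟩, by simpa using hα0, by ring⟩
  have hbdd : BddAbove T := by
    refine ⟨(m:ℝ), ?_⟩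
    rintro r ⟨μ, v, δ, ⟨hμ0, hμ1⟩, ⟨hv0, hv1⟩, ⟨hδ0, hδ1⟩, hμδ, rfl⟩
    nlinarith [mul_nonneg hμ0 hδ0, mul_nonneg hμ0 hv0,
      mul_nonneg (mul_nonneg hμ0 hm0.le) (by linarith : (0:ℝ) ≤ 1 - v - δ),
      mul_nonneg (by linarith : (0:ℝ) ≤ 1 - μ) (by linarith : (0:ℝ) ≤ (m:ℝ) - jstar)]
  refine ⟨?_, ?_, ?_⟩
  · -- Case 1
    intro h1 h2
    have hα1' : α ≤ 1 - j / m := by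
      have : j / m ≤ 1 - α := by rw [div_le_iff₀ hm0]; nlinarith
      linarith
    apply le_antisymm
    · apply csSup_le hne
      rintro r ⟨μ, v, δ, ⟨hμ0, hμ1⟩, ⟨hv0, hv1⟩, ⟨hδ0, hδ1⟩, hμδ, rfl⟩
      have hv' : v * (m:ℝ) ≤ j := by
        rw [← le_div_iff₀ hm0]; exact hv1
      nlinarith [mul_le_mul_of_nonneg_left hv' hμ0,
        mul_nonneg (by linarith : (0:ℝ) ≤ 1 - μ) (by linarith : (0:ℝ) ≤ j - jstar),
        mul_le_mul_of_nonneg_left hμδ hm0.le, mul_nonneg hμ0 hδ0]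
    · apply le_csSup hbdd
      refine ⟨1, j/m, α, ⟨by norm_num, le_refl 1⟩, ⟨hjm_div, le_refl _⟩,
        ⟨hα0, hα1'⟩, by linarith, ?_⟩
      field_simp
      ring
  · -- Case 2
    intro h1 h2
    have hδα : 1 - j / m ≤ α := by
      have : 1 - α ≤ j / m := by rw [le_div_iff₀ hm0]; nlinarith
      linarith
    apply le_antisymm
    · apply csSup_le hne
      rintro r ⟨μ, v, δ, ⟨hμ0, hμ1⟩, ⟨hv0, hv1⟩, ⟨hδ0, hδ1⟩, hμδ, rfl⟩
      nlinarith [mul_nonneg (mul_nonneg hμ0 hm0.le) (by linarith : (0:ℝ) ≤ 1 - v - δ),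
        mul_nonneg (by linarith : (0:ℝ) ≤ 1 - μ) (by linarith : (0:ℝ) ≤ (m:ℝ) - jstar)]
    · apply le_csSup hbdd
      have hjm1 : j / m ≤ 1 := by rw [div_le_one hm0]; exact hjm
      refine ⟨1, j/m, 1 - j/m, ⟨by norm_num, le_refl 1⟩, ⟨hjm_div, le_refl _⟩,
        ⟨by linarith, le_refl _⟩, by simpa using hδα, ?_⟩
      field_simp
      ring
  · -- Case 3
    intro h1 h2 h3
    have hmj : (0:ℝ) < (m:ℝ) - j := by linarith
    have hαm : α * m ≤ (m:ℝ) - j := by nlinarith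
    apply le_antisymm
    · apply csSup_le hne
      rintro r ⟨μ, v, δ, ⟨hμ0, hμ1⟩, ⟨hv0, hv1⟩, ⟨hδ0, hδ1⟩, hμδ, rfl⟩
      rw [le_div_iff₀ hmj]
      have hv' : v * (m:ℝ) ≤ j := by rw [← le_div_iff₀ hm0]; exact hv1
      -- key1 : μ * ((m:ℝ)*(v+δ) - j) ≤ α * m
      have key1 : μ * ((m:ℝ)*(v+δ) - j) ≤ α * m := by
        nlinarith [mul_le_mul_of_nonneg_left hv' hμ0,
          mul_le_mul_of_nonneg_left hμδ hm0.le, mul_nonneg hμ0 hδ0]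
      -- key2 : μ*(m*(v+δ)-jstar)*(m-j) ≤ μ*(m*(v+δ)-j)*(m-jstar)
      have key2 : μ * ((m:ℝ)*(v+δ) - jstar) * ((m:ℝ) - j)
          ≤ μ * ((m:ℝ)*(v+δ) - j) * ((m:ℝ) - jstar) := by
        nlinarith [mul_nonneg (mul_nonneg (mul_nonneg hμ0 hm0.le)
          (by linarith : (0:ℝ) ≤ jstar - j)) (by linarith : (0:ℝ) ≤ 1 - v - δ)]
      have key3 : μ * ((m:ℝ)*(v+δ) - j) * ((m:ℝ) - jstar) ≤ α * m * ((m:ℝ) - jstar) :=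
        mul_le_mul_of_nonneg_right key1 (by linarith)
      linarith
    · apply le_csSup hbdd
      have hμ1' : α * m / ((m:ℝ) - j) ≤ 1 := by
        rw [div_le_one hmj]; exact hαm
      have hμ0' : 0 ≤ α * m / ((m:ℝ) - j) := by positivity
      have hjm1 : j / m ≤ 1 := by rw [div_le_one hm0]; exact hjm
      refine ⟨α * m / ((m:ℝ) - j), j/m, 1 - j/m, ⟨hμ0', hμ1'⟩, ⟨hjm_div, le_refl _⟩,
        ⟨by linarith, le_refl _⟩, ?_, ?_⟩
      · have : α * m / ((m:ℝ) - j) * (1 - j/m) = α := by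
          field_simp
          try ring
        exact le_of_eq this
      · field_simp
        try ring
end

section
/- (Closed form for the over-treatment optimization problem under ECE.) Let m ≥ 2 be an integer, j* real with 0 < j* < m, α ∈ [0,1], and j ∈ [0,m]. Define T(j) as the supremum of μ·(j* − m·(v−δ)) over all μ ∈ [0,1], v ∈ [j/m, 1], δ ∈ [0, v] satisfying μ·δ ≤ α. Then: T(j) = j* − j + αm whenever αm ≤ j ≤ j*; T(j) = j* whenever j ≤ j* and j ≤ αm; and T(j) = αm·j*/j whenever j ≥ j*, j ≥ αm and j > 0. -/
/-- **Closed form for the over-treatment optimization problem under ECE.**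
Let `m ≥ 2`, `0 < j* < m`, `α ∈ [0,1]`, `j ∈ [0,m]`, and let `T(j)` be the supremum of
`μ·(j* − m·(v−δ))` over `μ ∈ [0,1]`, `v ∈ [j/m, 1]`, `δ ∈ [0, v]` with `μ·δ ≤ α`.
Then `T(j) = j* − j + αm` for `αm ≤ j ≤ j*`; `T(j) = j*` for `j ≤ j*` and `j ≤ αm`; and
`T(j) = αm·j*/j` for `j ≥ j*`, `j ≥ αm`, `j > 0`. -/
theorem over_treatment_opt_closed_form
    (m : ℕ) (hm : 2 ≤ m)
    (jstar : ℝ) (hjstar1 : 0 < jstar) (hjstar2 : jstar < m)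
    (α : ℝ) (hα : α ∈ Set.Icc (0 : ℝ) 1)
    (j : ℝ) (hj : j ∈ Set.Icc (0 : ℝ) (m : ℝ)) :
    let T : ℝ := sSup {r | ∃ μ v δ : ℝ,
      μ ∈ Set.Icc (0 : ℝ) 1 ∧ v ∈ Set.Icc (j / m) 1 ∧ δ ∈ Set.Icc (0 : ℝ) v ∧
      μ * δ ≤ α ∧ r = μ * (jstar - (m : ℝ) * (v - δ))}
    (α * m ≤ j → j ≤ jstar → T = jstar - j + α * m) ∧
    (j ≤ jstar → j ≤ α * m → T = jstar) ∧
    (jstar ≤ j → α * m ≤ j → 0 < j → T = α * m * jstar / j) := by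
  obtain ⟨hα0, hα1⟩ := hα
  obtain ⟨hj0, hjm⟩ := hj
  have hm0 : (0:ℝ) < m := by
    have : (2:ℝ) ≤ m := by exact_mod_cast hm
    linarith
  intro T
  set S : Set ℝ := {r | ∃ μ v δ : ℝ,
      μ ∈ Set.Icc (0 : ℝ) 1 ∧ v ∈ Set.Icc (j / m) 1 ∧ δ ∈ Set.Icc (0 : ℝ) v ∧
      μ * δ ≤ α ∧ r = μ * (jstar - (m : ℝ) * (v - δ))} with hS
  have hub : ∀ r ∈ S, r ≤ jstar := by
    rintro r ⟨μ, v, δ, ⟨hμ0, hμ1⟩, ⟨hv1, hv2⟩, ⟨hδ0, hδv⟩, hμδ, rfl⟩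
    nlinarith [mul_nonneg hμ0 (mul_nonneg hm0.le (sub_nonneg.mpr hδv)),
      mul_nonneg (sub_nonneg.mpr hμ1) hjstar1.le]
  have hbdd : BddAbove S := ⟨jstar, hub⟩
  refine ⟨?_, ?_, ?_⟩
  · intro h1 h2
    apply le_antisymm
    · apply Real.sSup_le
      · rintro r ⟨μ, v, δ, ⟨hμ0, hμ1⟩, ⟨hv1, hv2⟩, ⟨hδ0, hδv⟩, hμδ, rfl⟩
        have hjv : j ≤ m * v := by
          rw [div_le_iff₀ hm0] at hv1; linarith [hv1]
        nlinarith [mul_nonneg hμ0 (sub_nonneg.mpr hjv),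
          mul_nonneg (sub_nonneg.mpr hμ1) (sub_nonneg.mpr h2),
          mul_nonneg hm0.le (sub_nonneg.mpr hμδ)]
      · nlinarith
    · apply le_csSup hbdd
      refine ⟨1, j / m, α, ⟨zero_le_one, le_refl 1⟩, ⟨le_refl _, ?_⟩,
        ⟨hα0, ?_⟩, by linarith, ?_⟩
      · rw [div_le_one hm0]; exact hjm
      · rw [le_div_iff₀ hm0]; linarith
      · field_simp
        ring
  · intro h1 h2
    apply le_antisymm
    · exact Real.sSup_le hub hjstar1.le
    · apply le_csSup hbdd
      refine ⟨1, j / m, j / m, ⟨zero_le_one, le_refl 1⟩, ⟨le_refl _, ?_⟩,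
        ⟨by positivity, le_refl _⟩, ?_, by ring⟩
      · rw [div_le_one hm0]; exact hjm
      · rw [one_mul, div_le_iff₀ hm0]; linarith
  · intro h1 h2 h3
    apply le_antisymm
    · apply Real.sSup_le
      · rintro r ⟨μ, v, δ, ⟨hμ0, hμ1⟩, ⟨hv1, hv2⟩, ⟨hδ0, hδv⟩, hμδ, rfl⟩
        have hjv : j ≤ m * v := by
          rw [div_le_iff₀ hm0] at hv1; linarith [hv1]
        rw [le_div_iff₀ h3]
        rcases le_total (μ * j) (α * m) with hc | hc
        · nlinarith [mul_nonneg (mul_nonneg hμ0 (mul_nonneg hm0.le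
            (sub_nonneg.mpr hδv))) h3.le,
            mul_nonneg (sub_nonneg.mpr hc) hjstar1.le]
        · nlinarith [mul_nonneg (sub_nonneg.mpr hc) (sub_nonneg.mpr h1),
            mul_nonneg (mul_nonneg hμ0 (sub_nonneg.mpr hjv)) h3.le,
            mul_nonneg (mul_nonneg hm0.le (sub_nonneg.mpr hμδ)) h3.le]
      · positivity
    · apply le_csSup hbdd
      refine ⟨α * m / j, j / m, j / m, ⟨by positivity, ?_⟩, ⟨le_refl _, ?_⟩,
        ⟨by positivity, le_refl _⟩, ?_, ?_⟩
      · rw [div_le_one h3]; exact h2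
      · rw [div_le_one hm0]; exact hjm
      · rw [div_mul_div_comm, div_le_iff₀ (by positivity)]
        nlinarith
      · field_simp
        ring
end

section
/- (Closed form for the worst-case ECE regret of two-value predictors.) Let m ≥ 2 be an integer, j* real with 0 < j* < m, and α ∈ (0,1), and assume αm ≤ min{j*, m−j*}. For every threshold j ∈ [0,m], the supremum of regret(j) over all configurations with n ≤ 2 (at most two mass points) and ECE at most α equals (1/min{m−j*, j*}) times: max{ j*, αm·(m−j*)/(m−j) } if j < j* and j ≤ αm; max{ j*−j+αm, αm·(m−j*)/(m−j) } if αm < j ≤ j*; max{ j−j*+αm, αm·j*/j } if j* < j ≤ (1−α)m; and max{ m−j*, αm·j*/j } if j ≥ j* and j > (1−α)m. -/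
namespace SupRegretAux

/-- Two-point configuration: point 0 carries `(μ, v, y)`, point 1 carries `(1-μ, 0, 0)`. -/
noncomputable def cfg2 (μ v y : ℝ) (hμ : μ ∈ Set.Icc (0:ℝ) 1)
    (hv : v ∈ Set.Icc (0:ℝ) 1) (hy : y ∈ Set.Icc (0:ℝ) 1) : Config where
  n := 2
  μ := ![μ, 1 - μ]
  v := ![v, 0]
  y := ![y, 0]
  μ_nonneg := by
    intro k; fin_cases k
    · simpa using hμ.1
    · have : (0:ℝ) ≤ 1 - μ := by linarith [hμ.2]
      simpa using this
  μ_sum := by simp [Fin.sum_univ_two]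
  v_mem := by
    intro k; fin_cases k
    · simpa using hv
    · simp
  y_mem := by
    intro k; fin_cases k
    · simpa using hy
    · simp

lemma netBenefit_cfg2 (m : ℕ) (jstar μ v y : ℝ) (hμ : μ ∈ Set.Icc (0:ℝ) 1)
    (hv : v ∈ Set.Icc (0:ℝ) 1) (hy : y ∈ Set.Icc (0:ℝ) 1) (j' : ℝ) (hj' : 0 ≤ j') :
    netBenefit m jstar (cfg2 μ v y hμ hv hy) j'
      = if j' < (m:ℝ) * v then μ * ((m:ℝ) * y - jstar) / min ((m:ℝ) - jstar) jstar else 0 := by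
  rw [netBenefit]
  simp only [cfg2]
  erw [Fin.sum_univ_two]
  have h2 : ¬ (j' < (m:ℝ) * (![v, 0] 1)) := by simp; linarith
  erw [if_neg h2, add_zero]
  simp
  rfl

lemma ece_cfg2 (α : ℝ) (μ v y : ℝ) (hμ : μ ∈ Set.Icc (0:ℝ) 1)
    (hv : v ∈ Set.Icc (0:ℝ) 1) (hy : y ∈ Set.Icc (0:ℝ) 1)
    (h : μ * |y - v| ≤ α) : ECEle α (cfg2 μ v y hμ hv hy) := by
  unfold ECEle
  simp only [cfg2]
  erw [Fin.sum_univ_two]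
  simpa using h

end SupRegretAux
namespace SupRegretAux

lemma regret_cfg2_rem (m : ℕ) (jstar : ℝ) (hc : 0 < min ((m:ℝ) - jstar) jstar)
    (μ v y j : ℝ) (hμ : μ ∈ Set.Icc (0:ℝ) 1) (hv : v ∈ Set.Icc (0:ℝ) 1)
    (hy : y ∈ Set.Icc (0:ℝ) 1) (hj0 : 0 ≤ j) (hjv : j < (m:ℝ) * v)
    (hyj : (m:ℝ) * y ≤ jstar) :
    configRegret m jstar (cfg2 μ v y hμ hv hy) j
      = μ * (jstar - (m:ℝ) * y) / min ((m:ℝ) - jstar) jstar := by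
  have hm0 : (0:ℝ) ≤ m := Nat.cast_nonneg m
  have hvM : (m:ℝ) * v ≤ m := by nlinarith [hv.2]
  have hgr : IsGreatest (netBenefit m jstar (cfg2 μ v y hμ hv hy) '' Set.Icc 0 (m:ℝ)) 0 := by
    constructor
    · refine ⟨(m:ℝ), ⟨hm0, le_refl _⟩, ?_⟩
      rw [netBenefit_cfg2 m jstar μ v y hμ hv hy (m:ℝ) hm0, if_neg (not_lt.2 hvM)]
    · rintro x ⟨j', hj', rfl⟩
      rw [netBenefit_cfg2 m jstar μ v y hμ hv hy j' hj'.1]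
      split
      · apply div_nonpos_of_nonpos_of_nonneg _ hc.le
        have := hμ.1
        nlinarith
      · exact le_refl 0
  rw [configRegret, hgr.csSup_eq, netBenefit_cfg2 m jstar μ v y hμ hv hy j hj0, if_pos hjv]
  ring

lemma regret_cfg2_add (m : ℕ) (jstar : ℝ) (hc : 0 < min ((m:ℝ) - jstar) jstar)
    (μ v y j : ℝ) (hμ : μ ∈ Set.Icc (0:ℝ) 1) (hv : v ∈ Set.Icc (0:ℝ) 1)
    (hy : y ∈ Set.Icc (0:ℝ) 1) (hjM : j ≤ (m:ℝ)) (hv0 : 0 < (m:ℝ) * v)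
    (hvj : (m:ℝ) * v ≤ j) (hyj : jstar ≤ (m:ℝ) * y) :
    configRegret m jstar (cfg2 μ v y hμ hv hy) j
      = μ * ((m:ℝ) * y - jstar) / min ((m:ℝ) - jstar) jstar := by
  have hm0 : (0:ℝ) ≤ m := le_trans (le_trans (by linarith [hv0, hvj]) hvj) hjM
  have hval : 0 ≤ μ * ((m:ℝ) * y - jstar) / min ((m:ℝ) - jstar) jstar := by
    apply div_nonneg _ hc.le
    have := hμ.1
    nlinarith
  have hgr : IsGreatest (netBenefit m jstar (cfg2 μ v y hμ hv hy) '' Set.Icc 0 (m:ℝ))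
      (μ * ((m:ℝ) * y - jstar) / min ((m:ℝ) - jstar) jstar) := by
    constructor
    · refine ⟨0, ⟨le_refl _, hm0⟩, ?_⟩
      rw [netBenefit_cfg2 m jstar μ v y hμ hv hy 0 (le_refl 0), if_pos hv0]
    · rintro x ⟨j', hj', rfl⟩
      rw [netBenefit_cfg2 m jstar μ v y hμ hv hy j' hj'.1]
      split
      · exact le_refl _
      · exact hval
  have hj0 : (0:ℝ) ≤ j := le_trans hv0.le hvj
  rw [configRegret, hgr.csSup_eq, netBenefit_cfg2 m jstar μ v y hμ hv hy j hj0,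
    if_neg (not_lt.2 hvj), sub_zero]

lemma regret_cfg2_zero (m : ℕ) (jstar : ℝ) (j : ℝ) (hj : j ∈ Set.Icc (0:ℝ) (m:ℝ))
    (h0 : (0:ℝ) ∈ Set.Icc (0:ℝ) 1) :
    configRegret m jstar (cfg2 0 0 0 h0 h0 h0) j = 0 := by
  have hgr : IsGreatest (netBenefit m jstar (cfg2 0 0 0 h0 h0 h0) '' Set.Icc 0 (m:ℝ)) 0 := by
    constructor
    · refine ⟨j, hj, ?_⟩
      rw [netBenefit_cfg2 m jstar 0 0 0 h0 h0 h0 j hj.1]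
      simp
    · rintro x ⟨j', hj', rfl⟩
      rw [netBenefit_cfg2 m jstar 0 0 0 h0 h0 h0 j' hj'.1]
      split <;> simp
  rw [configRegret, hgr.csSup_eq, netBenefit_cfg2 m jstar 0 0 0 h0 h0 h0 j hj.1]
  simp

lemma configRegret_le (m : ℕ) (jstar : ℝ) (C : Config) (j B : ℝ)
    (hj : j ∈ Set.Icc (0:ℝ) (m:ℝ))
    (h : ∀ j' ∈ Set.Icc (0:ℝ) (m:ℝ),
      netBenefit m jstar C j' - netBenefit m jstar C j ≤ B) :
    configRegret m jstar C j ≤ B := by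
  rw [configRegret, sub_le_iff_le_add]
  apply csSup_le ⟨_, Set.mem_image_of_mem _ hj⟩
  rintro x ⟨j', hj', rfl⟩
  linarith [h j' hj']

lemma nb_diff_le (m : ℕ) (jstar α a b j j' : ℝ)
    (hc : 0 < min ((m:ℝ) - jstar) jstar) (C : Config)
    (hece : ECEle α C) (hb : 0 ≤ b)
    (hpt : ∀ k : Fin C.n,
      ((if j' < (m:ℝ) * C.v k then C.μ k * ((m:ℝ) * C.y k - jstar) else 0) -
       (if j < (m:ℝ) * C.v k then C.μ k * ((m:ℝ) * C.y k - jstar) else 0)) ≤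
      a * C.μ k + b * (C.μ k * |C.y k - C.v k|)) :
    netBenefit m jstar C j' - netBenefit m jstar C j
      ≤ (a + b * α) / min ((m:ℝ) - jstar) jstar := by
  have h1 : ∀ jj : ℝ, netBenefit m jstar C jj
      = (∑ k, if jj < (m:ℝ) * C.v k then C.μ k * ((m:ℝ) * C.y k - jstar) else 0)
        / min ((m:ℝ) - jstar) jstar := by
    intro jj
    rw [netBenefit, Finset.sum_div]
    congr 1; funext k; split <;> simp
  rw [h1, h1, div_sub_div_same, div_le_div_iff_of_pos_right hc]
  rw [← Finset.sum_sub_distrib]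
  calc (∑ k, ((if j' < (m:ℝ) * C.v k then C.μ k * ((m:ℝ) * C.y k - jstar) else 0) -
       (if j < (m:ℝ) * C.v k then C.μ k * ((m:ℝ) * C.y k - jstar) else 0)))
      ≤ ∑ k, (a * C.μ k + b * (C.μ k * |C.y k - C.v k|)) :=
        Finset.sum_le_sum fun k _ => hpt k
    _ = a * (∑ k, C.μ k) + b * (∑ k, C.μ k * |C.y k - C.v k|) := by
        rw [Finset.sum_add_distrib, Finset.mul_sum, Finset.mul_sum]
    _ ≤ a + b * α := by
        rw [C.μ_sum, mul_one]
        have := mul_le_mul_of_nonneg_left hece hb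
        linarith

end SupRegretAux
namespace SupRegretAux

lemma pt_add (M jstar j j' a b μ v y : ℝ) (hj' : j' ≤ j)
    (ha : 0 ≤ a) (hb : 0 ≤ b) (hμ : 0 ≤ μ)
    (hkey : M * v ≤ j → μ * (M * y - jstar) ≤ a * μ + b * (μ * |y - v|)) :
    ((if j' < M * v then μ * (M * y - jstar) else 0) -
     (if j < M * v then μ * (M * y - jstar) else 0)) ≤ a * μ + b * (μ * |y - v|) := by
  have hnn : 0 ≤ a * μ + b * (μ * |y - v|) := by positivity
  split_ifs with h1 h2 h2
  · simpa using hnn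
  · rw [sub_zero]; exact hkey (not_lt.1 h2)
  · exact absurd (lt_of_lt_of_le h2 (le_trans (not_lt.1 h1) hj')) (lt_irrefl j)
  · simpa using hnn

lemma pt_rem (M jstar j j' a b μ v y : ℝ) (hj' : j ≤ j')
    (ha : 0 ≤ a) (hb : 0 ≤ b) (hμ : 0 ≤ μ)
    (hkey : j < M * v → μ * (jstar - M * y) ≤ a * μ + b * (μ * |y - v|)) :
    ((if j' < M * v then μ * (M * y - jstar) else 0) -
     (if j < M * v then μ * (M * y - jstar) else 0)) ≤ a * μ + b * (μ * |y - v|) := by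
  have hnn : 0 ≤ a * μ + b * (μ * |y - v|) := by positivity
  split_ifs with h1 h2 h2
  · simpa using hnn
  · exact absurd (lt_of_le_of_lt hj' h1) (not_lt.2 (not_lt.1 h2))
  · rw [zero_sub]
    have := hkey h2
    linarith
  · simpa using hnn

/-- Addition bound when `j ≤ jstar`. -/
lemma K_A1 (M jstar j μ v y : ℝ) (hM : 0 < M) (hjsM : jstar < M) (hjj : j ≤ jstar)
    (hμ : 0 ≤ μ) (hy1 : y ≤ 1) (hvj : M * v ≤ j) :
    μ * (M * y - jstar) ≤ 0 * μ + (M * (M - jstar) / (M - j)) * (μ * |y - v|) := by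
  have hMj : 0 < M - j := by linarith
  have habs : μ * (y - v) ≤ μ * |y - v| := mul_le_mul_of_nonneg_left (le_abs_self _) hμ
  have habs' : M * (μ * (y - v)) ≤ M * (μ * |y - v|) := mul_le_mul_of_nonneg_left habs hM.le
  have hmv : μ * (M * v) ≤ μ * j := mul_le_mul_of_nonneg_left hvj hμ
  have hin : μ * (M * y) ≤ μ * j + M * (μ * |y - v|) := by nlinarith [habs', hmv]
  have hMy : 0 ≤ μ * (M - M * y) := mul_nonneg hμ (by nlinarith)
  rw [zero_mul, zero_add, div_mul_eq_mul_div, le_div_iff₀ hMj]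
  nlinarith [mul_nonneg (by linarith : (0:ℝ) ≤ M - jstar)
      (by linarith [hin] : 0 ≤ μ * j + M * (μ * |y - v|) - μ * (M * y)),
    mul_nonneg (by linarith : (0:ℝ) ≤ jstar - j) hMy]

/-- Addition bound, generic linear form. -/
lemma K_A2 (M jstar j μ v y : ℝ) (hM : 0 < M) (hμ : 0 ≤ μ) (hvj : M * v ≤ j) :
    μ * (M * y - jstar) ≤ (j - jstar) * μ + M * (μ * |y - v|) := by
  have habs : μ * (y - v) ≤ μ * |y - v| := mul_le_mul_of_nonneg_left (le_abs_self _) hμ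
  have habs' : M * (μ * (y - v)) ≤ M * (μ * |y - v|) := mul_le_mul_of_nonneg_left habs hM.le
  have hmv : μ * (M * v) ≤ μ * j := mul_le_mul_of_nonneg_left hvj hμ
  nlinarith [habs', hmv]

/-- Addition bound capped by total mass. -/
lemma K_A3 (M jstar μ v y : ℝ) (hM : 0 < M) (hμ : 0 ≤ μ) (hy1 : y ≤ 1) :
    μ * (M * y - jstar) ≤ (M - jstar) * μ + 0 * (μ * |y - v|) := by
  nlinarith [mul_nonneg hμ (by nlinarith : (0:ℝ) ≤ M - M * y)]

/-- Removal bound capped by total mass. -/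
lemma K_R1 (M jstar μ v y : ℝ) (hM : 0 ≤ M) (hμ : 0 ≤ μ) (hy0 : 0 ≤ y) :
    μ * (jstar - M * y) ≤ jstar * μ + 0 * (μ * |y - v|) := by
  nlinarith [mul_nonneg hμ (mul_nonneg hM hy0)]

/-- Removal bound, generic linear form. -/
lemma K_R2 (M jstar j μ v y : ℝ) (hM : 0 < M) (hμ : 0 ≤ μ) (hjv : j < M * v) :
    μ * (jstar - M * y) ≤ (jstar - j) * μ + M * (μ * |y - v|) := by
  have habs : μ * (v - y) ≤ μ * |y - v| := by
    rw [abs_sub_comm]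
    exact mul_le_mul_of_nonneg_left (le_abs_self _) hμ
  have habs' : M * (μ * (v - y)) ≤ M * (μ * |y - v|) := mul_le_mul_of_nonneg_left habs hM.le
  have hmv : μ * j ≤ μ * (M * v) := mul_le_mul_of_nonneg_left hjv.le hμ
  nlinarith [habs', hmv]

/-- Removal bound when `jstar ≤ j`. -/
lemma K_R3 (M jstar j μ v y : ℝ) (hM : 0 < M) (hjs : 0 ≤ jstar) (hjj : jstar ≤ j)
    (hj0 : 0 < j) (hμ : 0 ≤ μ) (hy0 : 0 ≤ y) (hy1 : y ≤ 1) (hjv : j < M * v) :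
    μ * (jstar - M * y) ≤ 0 * μ + (M * jstar / j) * (μ * |y - v|) := by
  have habs : μ * (v - y) ≤ μ * |y - v| := by
    rw [abs_sub_comm]
    exact mul_le_mul_of_nonneg_left (le_abs_self _) hμ
  have habs' : M * (μ * (v - y)) ≤ M * (μ * |y - v|) := mul_le_mul_of_nonneg_left habs hM.le
  have hmv : μ * j ≤ μ * (M * v) := mul_le_mul_of_nonneg_left hjv.le hμ
  have hin : μ * j ≤ μ * (M * y) + M * (μ * |y - v|) := by nlinarith [habs', hmv]
  rw [zero_mul, zero_add, div_mul_eq_mul_div, le_div_iff₀ hj0]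
  nlinarith [mul_le_mul_of_nonneg_left hin hjs,
    mul_nonneg (by linarith : (0:ℝ) ≤ j - jstar) (mul_nonneg hμ (mul_nonneg hM.le hy0))]

end SupRegretAux
namespace SupRegretAux

lemma mul_le_of_le_div2 (M x ε : ℝ) (hM : 0 < M) (h : ε ≤ x/(2*M)) : M * ε ≤ x / 2 := by
  rw [← div_div] at h
  have := (le_div_iff₀ hM).1 h
  linarith

lemma cfg2_n_le (μ v y : ℝ) (hμ : μ ∈ Set.Icc (0:ℝ) 1)
    (hv : v ∈ Set.Icc (0:ℝ) 1) (hy : y ∈ Set.Icc (0:ℝ) 1) :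
    (cfg2 μ v y hμ hv hy).n ≤ 2 := le_refl 2

/-- Removal witness for case 1 (`j ≤ αm`): value approaching `jstar / c`. -/
lemma EX1 (m : ℕ) (jstar α j w : ℝ) (hm : (2:ℝ) ≤ (m:ℝ))
    (hjs1 : 0 < jstar) (hjs2 : jstar < (m:ℝ)) (hα1 : 0 < α) (hα2 : α < 1)
    (hj0 : 0 ≤ j) (hjα : j ≤ α * (m:ℝ))
    (hw : w * min ((m:ℝ) - jstar) jstar < jstar) :
    ∃ r ∈ {r | ∃ C : Config, C.n ≤ 2 ∧ ECEle α C ∧ r = configRegret m jstar C j}, w < r := by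
  set M := (m:ℝ) with hM
  have hM0 : 0 < M := by linarith
  have hc : 0 < min (M - jstar) jstar := lt_min (by linarith) hjs1
  set c := min (M - jstar) jstar with hcdef
  set ε := min ((1-α)/2) (min (jstar/(2*M)) ((jstar - w*c)/(2*M))) with hε
  have hε0 : 0 < ε := by
    apply lt_min (by linarith)
    exact lt_min (div_pos hjs1 (by linarith)) (div_pos (by linarith) (by linarith))
  have hε1 : ε ≤ (1-α)/2 := min_le_left _ _
  have hε2 : ε ≤ jstar/(2*M) := le_trans (min_le_right _ _) (min_le_left _ _)
  have hε3 : ε ≤ (jstar - w*c)/(2*M) := le_trans (min_le_right _ _) (min_le_right _ _)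
  have hMε2 : M * ε ≤ jstar / 2 := mul_le_of_le_div2 _ _ _ hM0 hε2
  have hMε3 : M * ε ≤ (jstar - w*c) / 2 := mul_le_of_le_div2 _ _ _ hM0 hε3
  have hμm : (1:ℝ) ∈ Set.Icc (0:ℝ) 1 := by norm_num
  have hvm : α + ε ∈ Set.Icc (0:ℝ) 1 := ⟨by linarith, by linarith⟩
  have hym : ε ∈ Set.Icc (0:ℝ) 1 := ⟨hε0.le, by linarith⟩
  refine ⟨1 * (jstar - M * ε) / c,
    ⟨cfg2 1 (α + ε) ε hμm hvm hym, cfg2_n_le _ _ _ _ _ _, ?_, ?_⟩, ?_⟩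
  · apply ece_cfg2
    have : |ε - (α + ε)| = α := by
      rw [abs_of_nonpos (by linarith)]; ring
    rw [this, one_mul]
  · refine (regret_cfg2_rem m jstar hc 1 (α + ε) ε j hμm hvm hym hj0 ?_ ?_).symm
    · nlinarith
    · linarith
  · rw [lt_div_iff₀ hc, one_mul]
    linarith

/-- Removal witness for case 2 (`αm ≤ j ≤ jstar`): value approaching `(jstar - j + αm)/c`. -/
lemma EX2 (m : ℕ) (jstar α j w : ℝ) (hm : (2:ℝ) ≤ (m:ℝ))
    (hjs1 : 0 < jstar) (hjs2 : jstar < (m:ℝ)) (hα1 : 0 < α) (hα2 : α < 1)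
    (hjα : α * (m:ℝ) ≤ j) (hjjs : j ≤ jstar)
    (hw : w * min ((m:ℝ) - jstar) jstar < jstar - j + α * (m:ℝ)) :
    ∃ r ∈ {r | ∃ C : Config, C.n ≤ 2 ∧ ECEle α C ∧ r = configRegret m jstar C j}, w < r := by
  set M := (m:ℝ) with hM
  have hM0 : 0 < M := by linarith
  have hc : 0 < min (M - jstar) jstar := lt_min (by linarith) hjs1
  set c := min (M - jstar) jstar with hcdef
  have hj0 : 0 ≤ j := le_trans (by positivity) hjα
  have hjM : j < M := by linarith
  have hp0 : 0 < jstar - j + α * M := by nlinarith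
  set ε := min ((M-j)/(2*M)) (min ((jstar - j + α*M)/(2*M)) ((jstar - j + α*M - w*c)/(2*M))) with hε
  have hε0 : 0 < ε := by
    apply lt_min (div_pos (by linarith) (by linarith))
    exact lt_min (div_pos (by linarith) (by linarith)) (div_pos (by linarith) (by linarith))
  have hε1 : ε ≤ (M-j)/(2*M) := min_le_left _ _
  have hε2 : ε ≤ (jstar - j + α*M)/(2*M) := le_trans (min_le_right _ _) (min_le_left _ _)
  have hε3 : ε ≤ (jstar - j + α*M - w*c)/(2*M) := le_trans (min_le_right _ _) (min_le_right _ _)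
  have hMε1 : M * ε ≤ (M - j) / 2 := mul_le_of_le_div2 _ _ _ hM0 hε1
  have hMε2 : M * ε ≤ (jstar - j + α*M) / 2 := mul_le_of_le_div2 _ _ _ hM0 hε2
  have hMε3 : M * ε ≤ (jstar - j + α*M - w*c) / 2 := mul_le_of_le_div2 _ _ _ hM0 hε3
  have hjMα : α ≤ j / M := by rw [le_div_iff₀ hM0]; linarith
  have hjM1 : j / M ≤ 1 := by rw [div_le_one hM0]; linarith
  have hMv : M * (j/M + ε) = j + M * ε := by field_simp <;> ring
  have hMy : M * (j/M + ε - α) = j + M * ε - α * M := by field_simp <;> ring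
  have hμm : (1:ℝ) ∈ Set.Icc (0:ℝ) 1 := by norm_num
  have hvm : j/M + ε ∈ Set.Icc (0:ℝ) 1 := by
    constructor
    · positivity
    · have : (M-j)/2 ≤ M - j := by linarith
      rw [← sub_nonneg]
      have h1 : M * (1 - (j/M + ε)) = M - j - M*ε := by field_simp <;> ring
      nlinarith
  have hym : j/M + ε - α ∈ Set.Icc (0:ℝ) 1 := by
    constructor
    · linarith
    · linarith [hvm.2]
  refine ⟨1 * (jstar - M * (j/M + ε - α)) / c,
    ⟨cfg2 1 (j/M + ε) (j/M + ε - α) hμm hvm hym, cfg2_n_le _ _ _ _ _ _, ?_, ?_⟩, ?_⟩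
  · apply ece_cfg2
    have : |(j/M + ε - α) - (j/M + ε)| = α := by
      rw [show (j/M + ε - α) - (j/M + ε) = -α by ring, abs_neg, abs_of_pos hα1]
    rw [this, one_mul]
  · refine (regret_cfg2_rem m jstar hc 1 (j/M + ε) (j/M + ε - α) j hμm hvm hym hj0 ?_ ?_).symm
    · rw [hMv]; nlinarith
    · rw [hMy]; linarith
  · rw [lt_div_iff₀ hc, one_mul, hMy]
    linarith

end SupRegretAux
namespace SupRegretAux

/-- Removal witness with partial mass `αm/j`: value approaching `αm·jstar/(j·c)`. -/
lemma EX3 (m : ℕ) (jstar α j w : ℝ) (hm : (2:ℝ) ≤ (m:ℝ))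
    (hjs1 : 0 < jstar) (hjs2 : jstar < (m:ℝ)) (hα1 : 0 < α) (hα2 : α < 1)
    (hjα : α * (m:ℝ) ≤ j) (hjM : j < (m:ℝ))
    (hw : w * min ((m:ℝ) - jstar) jstar < α * (m:ℝ) * jstar / j) :
    ∃ r ∈ {r | ∃ C : Config, C.n ≤ 2 ∧ ECEle α C ∧ r = configRegret m jstar C j}, w < r := by
  set M := (m:ℝ) with hM
  have hM0 : 0 < M := by linarith
  have hj0 : 0 < j := lt_of_lt_of_le (by positivity) hjα
  have hc : 0 < min (M - jstar) jstar := lt_min (by linarith) hjs1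
  set c := min (M - jstar) jstar with hcdef
  set q := α * M * jstar / j with hq
  have hq0 : 0 < q := by positivity
  set μ := α * M / j with hμdef
  have hμ0 : 0 < μ := by positivity
  have hμ1 : μ ≤ 1 := by rw [div_le_one hj0]; exact hjα
  set ε := min ((M-j)/(2*M)) (min (jstar/(2*M)) ((q - w*c)/(2*M))) with hε
  have hε0 : 0 < ε := by
    apply lt_min (div_pos (by linarith) (by linarith))
    exact lt_min (div_pos (by linarith) (by linarith)) (div_pos (by linarith) (by linarith))
  have hε1 : ε ≤ (M-j)/(2*M) := min_le_left _ _
  have hε2 : ε ≤ jstar/(2*M) := le_trans (min_le_right _ _) (min_le_left _ _)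
  have hε3 : ε ≤ (q - w*c)/(2*M) := le_trans (min_le_right _ _) (min_le_right _ _)
  have hMε1 : M * ε ≤ (M - j) / 2 := mul_le_of_le_div2 _ _ _ hM0 hε1
  have hMε2 : M * ε ≤ jstar / 2 := mul_le_of_le_div2 _ _ _ hM0 hε2
  have hMε3 : M * ε ≤ (q - w*c) / 2 := mul_le_of_le_div2 _ _ _ hM0 hε3
  have hμm : μ ∈ Set.Icc (0:ℝ) 1 := ⟨hμ0.le, hμ1⟩
  have hjM1 : j / M ≤ 1 := by rw [div_le_one hM0]; linarith
  have hvm : j/M + ε ∈ Set.Icc (0:ℝ) 1 := by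
    constructor
    · positivity
    · have h1 : M * (1 - (j/M + ε)) = M - j - M*ε := by field_simp <;> ring
      nlinarith
  have hym : ε ∈ Set.Icc (0:ℝ) 1 := by
    constructor
    · exact hε0.le
    · nlinarith
  have hMv : M * (j/M + ε) = j + M * ε := by field_simp <;> ring
  refine ⟨μ * (jstar - M * ε) / c,
    ⟨cfg2 μ (j/M + ε) ε hμm hvm hym, cfg2_n_le _ _ _ _ _ _, ?_, ?_⟩, ?_⟩
  · apply ece_cfg2
    have h1 : |ε - (j/M + ε)| = j/M := by
      rw [show ε - (j/M + ε) = -(j/M) by ring, abs_neg, abs_of_pos (by positivity)]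
    rw [h1]
    have : μ * (j / M) = α := by rw [hμdef]; field_simp <;> ring
    linarith
  · refine (regret_cfg2_rem m jstar hc μ (j/M + ε) ε j hμm hvm hym hj0.le ?_ ?_).symm
    · rw [hMv]; nlinarith
    · linarith
  · rw [lt_div_iff₀ hc]
    have hqval : μ * jstar = q := by rw [hμdef, hq]; ring
    have hμM : μ * (M * ε) ≤ M * ε := mul_le_of_le_one_left (mul_nonneg hM0.le hε0.le) hμ1
    have h2 : μ * (jstar - M*ε) = μ * jstar - μ * (M*ε) := by ring
    rw [h2, hqval]
    linarith

/-- Addition witness with partial mass `αm/(m-j)`: value exactly `αm(m-jstar)/((m-j)c)`. -/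
lemma EX4 (m : ℕ) (jstar α j w : ℝ) (hm : (2:ℝ) ≤ (m:ℝ))
    (hjs1 : 0 < jstar) (hjs2 : jstar < (m:ℝ)) (hα1 : 0 < α) (hα2 : α < 1)
    (hj0 : 0 < j) (hjα : j ≤ (1 - α) * (m:ℝ))
    (hw : w * min ((m:ℝ) - jstar) jstar < α * (m:ℝ) * ((m:ℝ) - jstar) / ((m:ℝ) - j)) :
    ∃ r ∈ {r | ∃ C : Config, C.n ≤ 2 ∧ ECEle α C ∧ r = configRegret m jstar C j}, w < r := by
  set M := (m:ℝ) with hM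
  have hM0 : 0 < M := by linarith
  have hMj : 0 < M - j := by nlinarith
  have hc : 0 < min (M - jstar) jstar := lt_min (by linarith) hjs1
  set c := min (M - jstar) jstar with hcdef
  set μ := α * M / (M - j) with hμdef
  have hμ0 : 0 < μ := by positivity
  have hμ1 : μ ≤ 1 := by rw [div_le_one hMj]; nlinarith
  have hμm : μ ∈ Set.Icc (0:ℝ) 1 := ⟨hμ0.le, hμ1⟩
  have hvm : j/M ∈ Set.Icc (0:ℝ) 1 := by
    constructor
    · positivity
    · rw [div_le_one hM0]; nlinarith
  have hym : (1:ℝ) ∈ Set.Icc (0:ℝ) 1 := by norm_num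
  have hMv : M * (j/M) = j := by field_simp
  refine ⟨μ * (M * 1 - jstar) / c,
    ⟨cfg2 μ (j/M) 1 hμm hvm hym, cfg2_n_le _ _ _ _ _ _, ?_, ?_⟩, ?_⟩
  · apply ece_cfg2
    have h1 : |(1:ℝ) - j/M| = 1 - j/M := abs_of_nonneg (by linarith [hvm.2])
    rw [h1]
    have : μ * (1 - j / M) = α := by rw [hμdef]; field_simp <;> ring
    linarith
  · refine (regret_cfg2_add m jstar hc μ (j/M) 1 j hμm hvm hym (by nlinarith) ?_ ?_ ?_).symm
    · rw [hMv]; exact hj0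
    · rw [hMv]
    · rw [mul_one]; linarith
  · rw [lt_div_iff₀ hc]
    have : μ * (M * 1 - jstar) = α * M * (M - jstar) / (M - j) := by
      rw [hμdef]; field_simp <;> ring
    rw [this]
    exact hw

/-- Addition witness, full mass, `y = j/m + α`: value exactly `(j - jstar + αm)/c`. -/
lemma EX5 (m : ℕ) (jstar α j w : ℝ) (hm : (2:ℝ) ≤ (m:ℝ))
    (hjs1 : 0 < jstar) (hjs2 : jstar < (m:ℝ)) (hα1 : 0 < α) (hα2 : α < 1)
    (hjsj : jstar ≤ j) (hjα : j ≤ (1 - α) * (m:ℝ))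
    (hw : w * min ((m:ℝ) - jstar) jstar < j - jstar + α * (m:ℝ)) :
    ∃ r ∈ {r | ∃ C : Config, C.n ≤ 2 ∧ ECEle α C ∧ r = configRegret m jstar C j}, w < r := by
  set M := (m:ℝ) with hM
  have hM0 : 0 < M := by linarith
  have hj0 : 0 < j := lt_of_lt_of_le hjs1 hjsj
  have hc : 0 < min (M - jstar) jstar := lt_min (by linarith) hjs1
  set c := min (M - jstar) jstar with hcdef
  have hμm : (1:ℝ) ∈ Set.Icc (0:ℝ) 1 := by norm_num
  have hjM1 : j / M ≤ 1 := by rw [div_le_one hM0]; nlinarith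
  have hvm : j/M ∈ Set.Icc (0:ℝ) 1 := ⟨by positivity, hjM1⟩
  have hym : j/M + α ∈ Set.Icc (0:ℝ) 1 := by
    constructor
    · positivity
    · rw [← sub_nonneg]
      have h1 : M * (1 - (j/M + α)) = M - j - α * M := by field_simp <;> ring
      nlinarith
  have hMv : M * (j/M) = j := by field_simp
  have hMy : M * (j/M + α) = j + α * M := by field_simp <;> ring
  refine ⟨1 * (M * (j/M + α) - jstar) / c,
    ⟨cfg2 1 (j/M) (j/M + α) hμm hvm hym, cfg2_n_le _ _ _ _ _ _, ?_, ?_⟩, ?_⟩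
  · apply ece_cfg2
    have h1 : |(j/M + α) - j/M| = α := by
      rw [show (j/M + α) - j/M = α by ring, abs_of_pos hα1]
    rw [h1, one_mul]
  · refine (regret_cfg2_add m jstar hc 1 (j/M) (j/M + α) j hμm hvm hym (by nlinarith) ?_ ?_ ?_).symm
    · rw [hMv]; exact hj0
    · rw [hMv]
    · rw [hMy]; nlinarith
  · rw [lt_div_iff₀ hc, one_mul, hMy]
    linarith

/-- Addition witness, full mass, `y = 1`: value exactly `(m - jstar)/c`. -/
lemma EX6 (m : ℕ) (jstar α j w : ℝ) (hm : (2:ℝ) ≤ (m:ℝ))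
    (hjs1 : 0 < jstar) (hjs2 : jstar < (m:ℝ)) (hα1 : 0 < α) (hα2 : α < 1)
    (hjα : (1 - α) * (m:ℝ) ≤ j) (hjM : j ≤ (m:ℝ))
    (hw : w * min ((m:ℝ) - jstar) jstar < (m:ℝ) - jstar) :
    ∃ r ∈ {r | ∃ C : Config, C.n ≤ 2 ∧ ECEle α C ∧ r = configRegret m jstar C j}, w < r := by
  set M := (m:ℝ) with hM
  have hM0 : 0 < M := by linarith
  have hj0 : 0 < j := lt_of_lt_of_le (by nlinarith) hjα
  have hc : 0 < min (M - jstar) jstar := lt_min (by linarith) hjs1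
  set c := min (M - jstar) jstar with hcdef
  have hμm : (1:ℝ) ∈ Set.Icc (0:ℝ) 1 := by norm_num
  have hjM1 : j / M ≤ 1 := by rw [div_le_one hM0]; linarith
  have hvm : j/M ∈ Set.Icc (0:ℝ) 1 := ⟨by positivity, hjM1⟩
  have hym : (1:ℝ) ∈ Set.Icc (0:ℝ) 1 := by norm_num
  have hMv : M * (j/M) = j := by field_simp
  refine ⟨1 * (M * 1 - jstar) / c,
    ⟨cfg2 1 (j/M) 1 hμm hvm hym, cfg2_n_le _ _ _ _ _ _, ?_, ?_⟩, ?_⟩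
  · apply ece_cfg2
    have h1 : |(1:ℝ) - j/M| = 1 - j/M := abs_of_nonneg (by linarith)
    rw [h1, one_mul]
    rw [← sub_nonneg]
    have h2 : M * (α - (1 - j/M)) = α * M - M + j := by field_simp <;> ring
    nlinarith
  · refine (regret_cfg2_add m jstar hc 1 (j/M) 1 j hμm hvm hym hjM ?_ ?_ ?_).symm
    · rw [hMv]; exact hj0
    · rw [hMv]
    · rw [mul_one]; linarith
  · rw [lt_div_iff₀ hc, one_mul, mul_one]
    exact hw

end SupRegretAux
namespace SupRegretAux

lemma sSup_eq_target (m : ℕ) (jstar α j T : ℝ)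
    (hub : ∀ C : Config, ECEle α C → configRegret m jstar C j ≤ T)
    (hex : ∀ w, w < T →
      ∃ r ∈ {r | ∃ C : Config, C.n ≤ 2 ∧ ECEle α C ∧ r = configRegret m jstar C j}, w < r) :
    sSup {r | ∃ C : Config, C.n ≤ 2 ∧ ECEle α C ∧ r = configRegret m jstar C j} = T := by
  obtain ⟨r0, hr0, _⟩ := hex (T - 1) (by linarith)
  refine csSup_eq_of_forall_le_of_forall_lt_exists_gt ⟨r0, hr0⟩ ?_ hex
  rintro r ⟨C, _, hC, rfl⟩
  exact hub C hC

end SupRegretAux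

open SupRegretAux

/-- **Closed form for the worst-case ECE regret of two-value predictors.**
Let `m ≥ 2`, `0 < j* < m`, `α ∈ (0,1)` with `αm ≤ min{j*, m−j*}`.  For every threshold
`j ∈ [0,m]`, the supremum of `regret(j)` over all configurations with at most two mass
points and ECE at most `α` equals `1/min{m−j*, j*}` times the piecewise expression:
`max{j*, αm·(m−j*)/(m−j)}` if `j < j*` and `j ≤ αm`;
`max{j*−j+αm, αm·(m−j*)/(m−j)}` if `αm < j ≤ j*`;
`max{j−j*+αm, αm·j*/j}` if `j* < j ≤ (1−α)m`;
`max{m−j*, αm·j*/j}` if `j ≥ j*` and `j > (1−α)m`. -/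
theorem sup_regret_two_value_configs_closed_form
    (m : ℕ) (hm : 2 ≤ m)
    (jstar : ℝ) (hjstar1 : 0 < jstar) (hjstar2 : jstar < m)
    (α : ℝ) (hα1 : 0 < α) (hα2 : α < 1)
    (hαm : α * m ≤ min jstar ((m : ℝ) - jstar))
    (j : ℝ) (hj : j ∈ Set.Icc (0 : ℝ) (m : ℝ)) :
    let E : ℝ :=
      sSup {r | ∃ C : Config, C.n ≤ 2 ∧ ECEle α C ∧ r = configRegret m jstar C j}
    (j < jstar → j ≤ α * m →
      E = (1 / min ((m : ℝ) - jstar) jstar) *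
        max jstar (α * m * ((m : ℝ) - jstar) / ((m : ℝ) - j))) ∧
    (α * m < j → j ≤ jstar →
      E = (1 / min ((m : ℝ) - jstar) jstar) *
        max (jstar - j + α * m) (α * m * ((m : ℝ) - jstar) / ((m : ℝ) - j))) ∧
    (jstar < j → j ≤ (1 - α) * m →
      E = (1 / min ((m : ℝ) - jstar) jstar) *
        max (j - jstar + α * m) (α * m * jstar / j)) ∧
    (jstar ≤ j → (1 - α) * m < j →
      E = (1 / min ((m : ℝ) - jstar) jstar) *
        max ((m : ℝ) - jstar) (α * m * jstar / j)) := by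
  intro E
  obtain ⟨hj0, hjM⟩ := hj
  have hm2 : (2:ℝ) ≤ (m:ℝ) := by exact_mod_cast hm
  have hM0 : (0:ℝ) < (m:ℝ) := by linarith
  have hc : 0 < min ((m:ℝ) - jstar) jstar := lt_min (by linarith) hjstar1
  have hαj : α * (m:ℝ) ≤ jstar := le_trans hαm (min_le_left _ _)
  have hαmj : α * (m:ℝ) ≤ (m:ℝ) - jstar := le_trans hαm (min_le_right _ _)
  have hαM0 : 0 < α * (m:ℝ) := by positivity
  refine ⟨?_, ?_, ?_, ?_⟩
  -- Case 1 : j < jstar, j ≤ αm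
  · intro hA hB
    refine sSup_eq_target m jstar α j _ ?_ ?_
    · intro C hece
      have hMj : 0 < (m:ℝ) - j := by linarith
      refine configRegret_le m jstar C j _ ⟨hj0, hjM⟩ ?_
      intro j' hj'
      rcases le_total j' j with hd | hd
      · have hb : 0 ≤ (m:ℝ) * ((m:ℝ) - jstar) / ((m:ℝ) - j) := div_nonneg (mul_nonneg hM0.le (by linarith)) hMj.le
        have hstep := nb_diff_le m jstar α 0 ((m:ℝ) * ((m:ℝ) - jstar) / ((m:ℝ) - j))
          j j' hc C hece hb
          (fun k => pt_add (m:ℝ) jstar j j' _ _ _ _ _ hd (le_refl 0) hb (C.μ_nonneg k)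
            (fun hvj => K_A1 (m:ℝ) jstar j _ _ _ hM0 hjstar2 hA.le (C.μ_nonneg k)
              (C.y_mem k).2 hvj))
        have heq : 0 + ((m:ℝ) * ((m:ℝ) - jstar) / ((m:ℝ) - j)) * α
            = α * (m:ℝ) * ((m:ℝ) - jstar) / ((m:ℝ) - j) := by ring
        have hle2 : (α * (m:ℝ) * ((m:ℝ) - jstar) / ((m:ℝ) - j)) / min ((m:ℝ) - jstar) jstar
            ≤ max (jstar) (α * (m:ℝ) * ((m:ℝ) - jstar) / ((m:ℝ) - j)) / min ((m:ℝ) - jstar) jstar :=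
          (div_le_div_iff_of_pos_right hc).2 (le_max_right _ _)
        rw [one_div_mul_eq_div]
        rw [heq] at hstep
        linarith
      · have hstep := nb_diff_le m jstar α jstar 0 j j' hc C hece (le_refl 0)
          (fun k => pt_rem (m:ℝ) jstar j j' _ _ _ _ _ hd hjstar1.le (le_refl 0) (C.μ_nonneg k)
            (fun _ => K_R1 (m:ℝ) jstar _ _ _ hM0.le (C.μ_nonneg k) (C.y_mem k).1))
        have heq : jstar + 0 * α = jstar := by ring
        have hle2 : (jstar) / min ((m:ℝ) - jstar) jstar
            ≤ max (jstar) (α * (m:ℝ) * ((m:ℝ) - jstar) / ((m:ℝ) - j)) / min ((m:ℝ) - jstar) jstar :=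
          (div_le_div_iff_of_pos_right hc).2 (le_max_left _ _)
        rw [one_div_mul_eq_div]
        rw [heq] at hstep
        linarith
    · intro w hw
      rw [one_div_mul_eq_div, lt_div_iff₀ hc] at hw
      rcases le_total jstar (α * (m:ℝ) * ((m:ℝ) - jstar) / ((m:ℝ) - j)) with hpq | hpq
      · rw [max_eq_right hpq] at hw
        have hj0' : 0 < j := by
          rcases hj0.lt_or_eq with h | h
          · exact h
          · exfalso
            rw [← h] at hpq
            have hq : α * (m:ℝ) * ((m:ℝ) - jstar) / ((m:ℝ) - 0) = α * ((m:ℝ) - jstar) := by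
              rw [sub_zero, mul_assoc, mul_div_assoc, mul_div_cancel_left₀ _ hM0.ne']
            rw [hq] at hpq
            nlinarith [mul_pos hα1 hjstar1]
        have hjle' : j ≤ (1 - α) * (m:ℝ) := by nlinarith
        exact EX4 m jstar α j w hm2 hjstar1 hjstar2 hα1 hα2 hj0' hjle' hw
      · rw [max_eq_left hpq] at hw
        exact EX1 m jstar α j w hm2 hjstar1 hjstar2 hα1 hα2 hj0 hB hw
  -- Case 2 : αm < j ≤ jstar
  · intro hA hB
    refine sSup_eq_target m jstar α j _ ?_ ?_
    · intro C hece
      have hMj : 0 < (m:ℝ) - j := by linarith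
      refine configRegret_le m jstar C j _ ⟨hj0, hjM⟩ ?_
      intro j' hj'
      rcases le_total j' j with hd | hd
      · have hb : 0 ≤ (m:ℝ) * ((m:ℝ) - jstar) / ((m:ℝ) - j) := div_nonneg (mul_nonneg hM0.le (by linarith)) hMj.le
        have hstep := nb_diff_le m jstar α 0 ((m:ℝ) * ((m:ℝ) - jstar) / ((m:ℝ) - j))
          j j' hc C hece hb
          (fun k => pt_add (m:ℝ) jstar j j' _ _ _ _ _ hd (le_refl 0) hb (C.μ_nonneg k)
            (fun hvj => K_A1 (m:ℝ) jstar j _ _ _ hM0 hjstar2 hB (C.μ_nonneg k)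
              (C.y_mem k).2 hvj))
        have heq : 0 + ((m:ℝ) * ((m:ℝ) - jstar) / ((m:ℝ) - j)) * α
            = α * (m:ℝ) * ((m:ℝ) - jstar) / ((m:ℝ) - j) := by ring
        have hle2 : (α * (m:ℝ) * ((m:ℝ) - jstar) / ((m:ℝ) - j)) / min ((m:ℝ) - jstar) jstar
            ≤ max (jstar - j + α * (m:ℝ)) (α * (m:ℝ) * ((m:ℝ) - jstar) / ((m:ℝ) - j)) / min ((m:ℝ) - jstar) jstar :=
          (div_le_div_iff_of_pos_right hc).2 (le_max_right _ _)
        rw [one_div_mul_eq_div]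
        rw [heq] at hstep
        linarith
      · have hstep := nb_diff_le m jstar α (jstar - j) (m:ℝ) j j' hc C hece hM0.le
          (fun k => pt_rem (m:ℝ) jstar j j' _ _ _ _ _ hd (by linarith) hM0.le (C.μ_nonneg k)
            (fun hjv => K_R2 (m:ℝ) jstar j _ _ _ hM0 (C.μ_nonneg k) hjv))
        have heq : (jstar - j) + (m:ℝ) * α = jstar - j + α * (m:ℝ) := by ring
        have hle2 : (jstar - j + α * (m:ℝ)) / min ((m:ℝ) - jstar) jstar
            ≤ max (jstar - j + α * (m:ℝ)) (α * (m:ℝ) * ((m:ℝ) - jstar) / ((m:ℝ) - j)) / min ((m:ℝ) - jstar) jstar :=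
          (div_le_div_iff_of_pos_right hc).2 (le_max_left _ _)
        rw [one_div_mul_eq_div]
        rw [heq] at hstep
        linarith
    · intro w hw
      rw [one_div_mul_eq_div, lt_div_iff₀ hc] at hw
      rcases le_total (jstar - j + α * (m:ℝ)) (α * (m:ℝ) * ((m:ℝ) - jstar) / ((m:ℝ) - j)) with hpq | hpq
      · rw [max_eq_right hpq] at hw
        have hj0' : 0 < j := lt_trans hαM0 hA
        have hjle' : j ≤ (1 - α) * (m:ℝ) := by nlinarith
        exact EX4 m jstar α j w hm2 hjstar1 hjstar2 hα1 hα2 hj0' hjle' hw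
      · rw [max_eq_left hpq] at hw
        exact EX2 m jstar α j w hm2 hjstar1 hjstar2 hα1 hα2 hA.le hB hw
  -- Case 3 : jstar < j ≤ (1-α)m
  · intro hA hB
    have hj0' : 0 < j := lt_trans hjstar1 hA
    refine sSup_eq_target m jstar α j _ ?_ ?_
    · intro C hece
      refine configRegret_le m jstar C j _ ⟨hj0, hjM⟩ ?_
      intro j' hj'
      rcases le_total j' j with hd | hd
      · have hstep := nb_diff_le m jstar α (j - jstar) (m:ℝ) j j' hc C hece hM0.le
          (fun k => pt_add (m:ℝ) jstar j j' _ _ _ _ _ hd (by linarith) hM0.le (C.μ_nonneg k)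
            (fun hvj => K_A2 (m:ℝ) jstar j _ _ _ hM0 (C.μ_nonneg k) hvj))
        have heq : (j - jstar) + (m:ℝ) * α = j - jstar + α * (m:ℝ) := by ring
        have hle2 : (j - jstar + α * (m:ℝ)) / min ((m:ℝ) - jstar) jstar
            ≤ max (j - jstar + α * (m:ℝ)) (α * (m:ℝ) * jstar / j) / min ((m:ℝ) - jstar) jstar :=
          (div_le_div_iff_of_pos_right hc).2 (le_max_left _ _)
        rw [one_div_mul_eq_div]
        rw [heq] at hstep
        linarith
      · have hb : 0 ≤ (m:ℝ) * jstar / j := by positivity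
        have hstep := nb_diff_le m jstar α 0 ((m:ℝ) * jstar / j) j j' hc C hece hb
          (fun k => pt_rem (m:ℝ) jstar j j' _ _ _ _ _ hd (le_refl 0) hb (C.μ_nonneg k)
            (fun hjv => K_R3 (m:ℝ) jstar j _ _ _ hM0 hjstar1.le hA.le hj0' (C.μ_nonneg k)
              (C.y_mem k).1 (C.y_mem k).2 hjv))
        have heq : 0 + ((m:ℝ) * jstar / j) * α = α * (m:ℝ) * jstar / j := by ring
        have hle2 : (α * (m:ℝ) * jstar / j) / min ((m:ℝ) - jstar) jstar
            ≤ max (j - jstar + α * (m:ℝ)) (α * (m:ℝ) * jstar / j) / min ((m:ℝ) - jstar) jstar :=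
          (div_le_div_iff_of_pos_right hc).2 (le_max_right _ _)
        rw [one_div_mul_eq_div]
        rw [heq] at hstep
        linarith
    · intro w hw
      rw [one_div_mul_eq_div, lt_div_iff₀ hc] at hw
      rcases le_total (j - jstar + α * (m:ℝ)) (α * (m:ℝ) * jstar / j) with hpq | hpq
      · rw [max_eq_right hpq] at hw
        have hjM' : j < (m:ℝ) := by nlinarith
        exact EX3 m jstar α j w hm2 hjstar1 hjstar2 hα1 hα2 (by linarith) hjM' hw
      · rw [max_eq_left hpq] at hw
        exact EX5 m jstar α j w hm2 hjstar1 hjstar2 hα1 hα2 hA.le hB hw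
  -- Case 4 : jstar ≤ j, (1-α)m < j
  · intro hA hB
    have hj0' : 0 < j := lt_of_lt_of_le hjstar1 hA
    refine sSup_eq_target m jstar α j _ ?_ ?_
    · intro C hece
      refine configRegret_le m jstar C j _ ⟨hj0, hjM⟩ ?_
      intro j' hj'
      rcases le_total j' j with hd | hd
      · have hstep := nb_diff_le m jstar α ((m:ℝ) - jstar) 0 j j' hc C hece (le_refl 0)
          (fun k => pt_add (m:ℝ) jstar j j' _ _ _ _ _ hd (by linarith) (le_refl 0) (C.μ_nonneg k)
            (fun _ => K_A3 (m:ℝ) jstar _ _ _ hM0 (C.μ_nonneg k) (C.y_mem k).2))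
        have heq : ((m:ℝ) - jstar) + 0 * α = (m:ℝ) - jstar := by ring
        have hle2 : ((m:ℝ) - jstar) / min ((m:ℝ) - jstar) jstar
            ≤ max ((m:ℝ) - jstar) (α * (m:ℝ) * jstar / j) / min ((m:ℝ) - jstar) jstar :=
          (div_le_div_iff_of_pos_right hc).2 (le_max_left _ _)
        rw [one_div_mul_eq_div]
        rw [heq] at hstep
        linarith
      · have hb : 0 ≤ (m:ℝ) * jstar / j := by positivity
        have hstep := nb_diff_le m jstar α 0 ((m:ℝ) * jstar / j) j j' hc C hece hb
          (fun k => pt_rem (m:ℝ) jstar j j' _ _ _ _ _ hd (le_refl 0) hb (C.μ_nonneg k)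
            (fun hjv => K_R3 (m:ℝ) jstar j _ _ _ hM0 hjstar1.le hA hj0' (C.μ_nonneg k)
              (C.y_mem k).1 (C.y_mem k).2 hjv))
        have heq : 0 + ((m:ℝ) * jstar / j) * α = α * (m:ℝ) * jstar / j := by ring
        have hle2 : (α * (m:ℝ) * jstar / j) / min ((m:ℝ) - jstar) jstar
            ≤ max ((m:ℝ) - jstar) (α * (m:ℝ) * jstar / j) / min ((m:ℝ) - jstar) jstar :=
          (div_le_div_iff_of_pos_right hc).2 (le_max_right _ _)
        rw [one_div_mul_eq_div]
        rw [heq] at hstep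
        linarith
    · intro w hw
      rw [one_div_mul_eq_div, lt_div_iff₀ hc] at hw
      rcases le_total ((m:ℝ) - jstar) (α * (m:ℝ) * jstar / j) with hpq | hpq
      · rw [max_eq_right hpq] at hw
        have hmul := (le_div_iff₀ hj0').1 hpq
        have hjM' : j < (m:ℝ) := by nlinarith [mul_le_mul_of_nonneg_right hαmj hjstar1.le]
        exact EX3 m jstar α j w hm2 hjstar1 hjstar2 hα1 hα2 (by linarith) hjM' hw
      · rw [max_eq_left hpq] at hw
        exact EX6 m jstar α j w hm2 hjstar1 hjstar2 hα1 hα2 hB.le hjM hw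
end

section
/- (Middle regime under ECE.) Let m ≥ 2 be an integer, j* real with 0 < j* < m, and α ∈ (0,1), and suppose αm < j* < (1−α)m. Define g : [0,m] → ℝ piecewise by: g(j) = max{ j*, αm·(m−j*)/(m−j) } if j < j* and j ≤ αm; g(j) = max{ j*−j+αm, αm·(m−j*)/(m−j) } if αm < j ≤ j*; g(j) = max{ j−j*+αm, αm·j*/j } if j* < j ≤ (1−α)m; and g(j) = max{ m−j*, αm·j*/j } if j ≥ j* and j > (1−α)m. Then g(j*) = αm, and g(j) ≥ αm for every j ∈ [0,m]; in particular the therapeutic threshold j* itself minimizes g in this regime. -/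
/-- **Middle regime under ECE.** Let `m ≥ 2`, `0 < j* < m`, `α ∈ (0,1)` with
`αm < j* < (1−α)m`, and define `g` on `[0,m]` piecewise by:
`g(j) = max{j*, αm·(m−j*)/(m−j)}` if `j < j*` and `j ≤ αm`;
`g(j) = max{j*−j+αm, αm·(m−j*)/(m−j)}` if `αm < j ≤ j*`;
`g(j) = max{j−j*+αm, αm·j*/j}` if `j* < j ≤ (1−α)m`;
`g(j) = max{m−j*, αm·j*/j}` if `j ≥ j*` and `j > (1−α)m`.
Then `g(j*) = αm` and `g(j) ≥ αm` for every `j ∈ [0,m]`; in particular the therapeutic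
threshold `j*` itself minimizes `g` in this regime. -/
theorem therapeutic_threshold_minimizes_g_middle_regime
    (m : ℕ) (hm : 2 ≤ m)
    (jstar : ℝ) (hjstar1 : 0 < jstar) (hjstar2 : jstar < m)
    (α : ℝ) (hα1 : 0 < α) (hα2 : α < 1)
    (hmid1 : α * m < jstar) (hmid2 : jstar < (1 - α) * m) :
    let g : ℝ → ℝ := fun j =>
      if j < jstar ∧ j ≤ α * m then
        max jstar (α * m * ((m : ℝ) - jstar) / ((m : ℝ) - j))
      else if α * m < j ∧ j ≤ jstar then
        max (jstar - j + α * m) (α * m * ((m : ℝ) - jstar) / ((m : ℝ) - j))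
      else if jstar < j ∧ j ≤ (1 - α) * m then
        max (j - jstar + α * m) (α * m * jstar / j)
      else
        max ((m : ℝ) - jstar) (α * m * jstar / j)
    g jstar = α * m ∧ ∀ j ∈ Set.Icc (0 : ℝ) (m : ℝ), α * m ≤ g j := by
  intro g
  have h1 : g jstar = α * m := by
    show (if _ then _ else _) = _
    rw [if_neg (by push_neg; intro h; exact absurd h (lt_irrefl jstar)),
        if_pos ⟨hmid1, le_refl jstar⟩]
    have : α * m * ((m : ℝ) - jstar) / ((m : ℝ) - jstar) = α * m := by
      rw [mul_div_assoc, div_self (sub_ne_zero.mpr (ne_of_gt hjstar2)), mul_one]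
    rw [this, sub_self, zero_add, max_self]
  refine ⟨h1, fun j hj => ?_⟩
  show α * m ≤ (if _ then _ else _)
  split_ifs with h2 h3 h4
  · exact le_trans hmid1.le (le_max_left _ _)
  · have : α * m ≤ jstar - j + α * m := by linarith [h3.2]
    exact le_trans this (le_max_left _ _)
  · have : α * m ≤ j - jstar + α * m := by linarith [h4.1]
    exact le_trans this (le_max_left _ _)
  · have : α * m ≤ (m : ℝ) - jstar := by nlinarith
    exact le_trans this (le_max_left _ _)
end
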